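/- arXiv:1912.09815 — 9 statements merged into one kernel-verified Lean document; each statement's English description precedes it below -/
import Mathlib

section
/- Fix n ≥ 1 and let G := ZMod (2*n) × ⨁_ℕ ZMod n. Let V be a finite type, E ⊆ V × V × V a set of equations (a triple (x,y,z) encodes the equation x = y + z), and D ⊆ V × V a set of disequalities. Then the following are equivalent: (a) there is an assignment s : V → G satisfying E (i.e., s x = s y + s z for every (x,y,z) ∈ E) such that s x ≠ s y for every (x,y) ∈ D; (b) there is an assignment r : V → ZMod (2*n) satisfying E such that for every (x,y) ∈ D with the property that every assignment t : V → ZMod n satisfying E has t x = t y, one has r x − r y = (n : ZMod (2*n)). -/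
/-- Correctness of the polynomial-time algorithm for systems of linear
equations and disequalities over `ZMod (2*n) × ⨁_ℕ ZMod n`. -/
theorem stmt_2 (n : ℕ) (hn : 1 ≤ n) (V : Type) [Fintype V]
    (E : Set (V × V × V)) (D : Set (V × V)) :
    (∃ s : V → ZMod (2 * n) × DirectSum ℕ (fun _ => ZMod n),
        (∀ p ∈ E, s p.1 = s p.2.1 + s p.2.2) ∧
        (∀ p ∈ D, s p.1 ≠ s p.2))
    ↔
    (∃ r : V → ZMod (2 * n),
        (∀ p ∈ E, r p.1 = r p.2.1 + r p.2.2) ∧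
        (∀ p ∈ D,
          (∀ t : V → ZMod n, (∀ q ∈ E, t q.1 = t q.2.1 + t q.2.2) → t p.1 = t p.2) →
          r p.1 - r p.2 = (n : ZMod (2 * n)))) := by
  classical
  haveI : NeZero (2 * n) := ⟨by omega⟩
  haveI : NeZero n := ⟨by omega⟩
  have hdvd : n ∣ 2 * n := dvd_mul_left n 2
  have hnne : (n : ZMod (2 * n)) ≠ 0 := by
    intro h
    rw [ZMod.natCast_eq_zero_iff] at h
    have := Nat.le_of_dvd (by omega) h
    omega
  constructor
  · rintro ⟨s, hsE, hsD⟩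
    refine ⟨fun v => (s v).1, fun p hp => by simp only [hsE p hp, Prod.fst_add], fun p hp hall => ?_⟩
    set x := p.1; set y := p.2
    set a : ZMod (2 * n) := (s x).1 - (s y).1 with ha
    -- reduction mod n of first coordinate is a solution
    have hcast : ((s x).1.cast : ZMod n) = ((s y).1.cast : ZMod n) := by
      apply hall (fun v => ((s v).1.cast : ZMod n))
      intro q hq
      have := hsE q hq
      have h1 : (s q.1).1 = (s q.2.1).1 + (s q.2.2).1 := by rw [this]; rfl
      rw [h1]
      exact map_add (ZMod.castHom hdvd (ZMod n)) _ _
    -- second components agree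
    have h2 : (s x).2 = (s y).2 := by
      refine DFunLike.ext _ _ fun i => ?_
      exact hall (fun v => (s v).2 i) (fun q hq => by
        show (s q.1).2 i = (s q.2.1).2 i + (s q.2.2).2 i
        rw [hsE q hq]; rfl)
    have hane : a ≠ 0 := by
      intro h0
      apply hsD p hp
      have : (s x).1 = (s y).1 := by rwa [sub_eq_zero] at h0
      exact Prod.ext this h2
    -- a maps to 0 under reduction
    have haz : (a.cast : ZMod n) = 0 := by
      have : (a.cast : ZMod n) = ((s x).1.cast : ZMod n) - ((s y).1.cast : ZMod n) :=
        map_sub (ZMod.castHom hdvd (ZMod n)) _ _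
      rw [this, hcast, sub_self]
    -- hence a = n
    have hval : (n : ℕ) ∣ a.val := by
      have : ((a.val : ℕ) : ZMod n) = 0 := by
        rw [ZMod.natCast_val, haz]
      rwa [ZMod.natCast_eq_zero_iff] at this
    have hlt : a.val < 2 * n := ZMod.val_lt a
    have hvne : a.val ≠ 0 := fun h => hane ((ZMod.val_eq_zero a).mp h)
    have : a.val = n := by
      rcases hval with ⟨k, hk⟩
      have hk2 : k < 2 := by nlinarith
      interval_cases k <;> omega
    calc a = ((a.val : ℕ) : ZMod (2 * n)) := by rw [ZMod.natCast_val, ZMod.cast_id]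
    _ = (n : ZMod (2 * n)) := by rw [this]
  · rintro ⟨r, hrE, hrD⟩
    obtain ⟨f, hf⟩ := exists_injective_nat (V × V)
    set T : V × V → V → ZMod n := fun p =>
      if h : ∃ t : V → ZMod n, (∀ q ∈ E, t q.1 = t q.2.1 + t q.2.2) ∧ t p.1 ≠ t p.2
      then h.choose else 0 with hT
    have hTE : ∀ p, ∀ q ∈ E, T p q.1 = T p q.2.1 + T p q.2.2 := by
      intro p q hq
      by_cases h : ∃ t : V → ZMod n, (∀ q ∈ E, t q.1 = t q.2.1 + t q.2.2) ∧ t p.1 ≠ t p.2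
      · simp only [hT, dif_pos h]; exact h.choose_spec.1 q hq
      · simp only [hT, dif_neg h, Pi.zero_apply, add_zero]
    refine ⟨fun v => (r v, ∑ p : V × V, DirectSum.of (fun _ => ZMod n) (f p) (T p v)),
      ?_, ?_⟩
    · intro q hq
      refine Prod.ext (hrE q hq) ?_
      show (∑ p : V × V, DirectSum.of (fun _ => ZMod n) (f p) (T p q.1))
        = (∑ p : V × V, DirectSum.of (fun _ => ZMod n) (f p) (T p q.2.1))
          + (∑ p : V × V, DirectSum.of (fun _ => ZMod n) (f p) (T p q.2.2))
      rw [← Finset.sum_add_distrib]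
      refine Finset.sum_congr rfl fun p _ => ?_
      rw [hTE p q hq, map_add]
    · intro p hp
      by_cases h : ∃ t : V → ZMod n, (∀ q ∈ E, t q.1 = t q.2.1 + t q.2.2) ∧ t p.1 ≠ t p.2
      · intro heq
        have hsnd := congrArg Prod.snd heq
        have hev : ∀ v, (∑ q : V × V, DirectSum.of (fun _ => ZMod n) (f q) (T q v)) (f p)
            = T p v := by
          intro v
          rw [DFinsupp.finset_sum_apply]
          rw [Finset.sum_eq_single p]
          · exact DirectSum.of_eq_same _ _
          · intro q _ hqp
            exact DirectSum.of_eq_of_ne _ _ _ (fun hfq => hqp (hf hfq.symm))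
          · intro hnp; exact absurd (Finset.mem_univ p) hnp
        have := congrFun (congrArg DFunLike.coe hsnd) (f p)
        simp only [hev] at this
        have hne : T p p.1 ≠ T p p.2 := by
          simp only [hT, dif_pos h]; exact h.choose_spec.2
        exact hne this
      · intro heq
        push_neg at h
        have := hrD p hp h
        have hfst := congrArg Prod.fst heq
        simp only at hfst
        rw [hfst, sub_self] at this
        exact hnne this.symm
end

section
/- Let H and K be groups whose exponents are finite and coprime, i.e., Monoid.exponent H ≠ 0, Monoid.exponent K ≠ 0, and Nat.Coprime (Monoid.exponent H) (Monoid.exponent K). Suppose there exist a monoid homomorphism s : (Fin 6 → H × K) →* H × K (tuples with pointwise multiplication) that preserves ≠, and injective monoid endomorphisms e₁, e₂ of H × K with e₁(s(x,y,x,z,y,z)) = e₂(s(y,x,z,x,z,y)) for all x,y,z ∈ H × K. Then the same data exist for H (a monoid homomorphism (Fin 6 → H) →* H preserving ≠ together with injective endomorphisms of H satisfying the corresponding identity), and likewise for K. -/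
open Monoid

private lemma pow_modeq_aux {M : Type*} [Monoid M] {m n : ℕ}
    (h : m ≡ n [MOD Monoid.exponent M]) (x : M) : x ^ m = x ^ n := by
  have key : ∀ k : ℕ, x ^ k = x ^ (k % Monoid.exponent M) := by
    intro k
    conv_lhs => rw [← Nat.mod_add_div k (Monoid.exponent M)]
    rw [pow_add, pow_mul, Monoid.pow_exponent_eq_one, one_pow, mul_one]
  rw [key m, key n, h]

private lemma aux_half {H K : Type} [Group H] [Group K]
    (hcop : Nat.Coprime (Monoid.exponent H) (Monoid.exponent K))
    (s : (Fin 6 → H × K) →* H × K)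
    (hs : ∀ p q : Fin 6 → H × K, (∀ i, p i ≠ q i) → s p ≠ s q)
    (e₁ e₂ : H × K →* H × K)
    (he₁ : Function.Injective e₁) (he₂ : Function.Injective e₂)
    (hsig : ∀ x y z : H × K, e₁ (s ![x, y, x, z, y, z]) = e₂ (s ![y, x, z, x, z, y])) :
    ∃ (t : (Fin 6 → H) →* H) (a b : H →* H),
      (∀ p q : Fin 6 → H, (∀ i, p i ≠ q i) → t p ≠ t q) ∧
      Function.Injective a ∧ Function.Injective b ∧
      (∀ x y z : H, a (t ![x, y, x, z, y, z]) = b (t ![y, x, z, x, z, y])) := by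
  obtain ⟨m, hm1, hm2⟩ := Nat.chineseRemainder hcop 1 0
  -- m ≡ 1 mod exp H, m ≡ 0 mod exp K
  have hHpow : ∀ x : H, x ^ m = x := fun x => by
    simpa using pow_modeq_aux hm1 x
  have hKpow : ∀ c : K, c ^ m = 1 := fun c => by
    simpa using pow_modeq_aux hm2 c
  have hfix : ∀ x : H, ((x, (1 : K)) : H × K) ^ m = (x, 1) := fun x => by
    rw [Prod.pow_def, hHpow, one_pow]
  -- if g^m = g then g.2 = 1
  have hsnd : ∀ g : H × K, g ^ m = g → g.2 = 1 := by
    intro g hg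
    have : g.2 ^ m = g.2 := congrArg Prod.snd hg
    rw [hKpow] at this
    exact this.symm
  set ι : H →* H × K := MonoidHom.inl H K with hι
  have hsι : ∀ p : Fin 6 → H, (s (fun i => (p i, 1))).2 = 1 := by
    intro p
    apply hsnd
    rw [← map_pow]
    congr 1
    funext i
    exact hfix (p i)
  have heι : ∀ (e : H × K →* H × K) (x : H), (e (x, 1)).2 = 1 := by
    intro e x
    apply hsnd
    rw [← map_pow, hfix]
  refine ⟨(MonoidHom.fst H K).comp (s.comp (ι.compLeft (Fin 6))),
    (MonoidHom.fst H K).comp (e₁.comp ι), (MonoidHom.fst H K).comp (e₂.comp ι),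
    ?_, ?_, ?_, ?_⟩
  · intro p q hpq hcon
    simp only [MonoidHom.comp_apply, MonoidHom.compLeft_apply] at hcon
    refine hs (fun i => (p i, 1)) (fun i => (q i, 1))
      (fun i h => hpq i (congrArg Prod.fst h)) ?_
    have h1 := hsι p
    have h2 := hsι q
    exact Prod.ext hcon (h1.trans h2.symm)
  · intro x y hxy
    simp only [MonoidHom.comp_apply, hι, MonoidHom.inl_apply] at hxy
    have : e₁ (x, 1) = e₁ (y, 1) := Prod.ext hxy ((heι e₁ x).trans (heι e₁ y).symm)
    exact congrArg Prod.fst (he₁ this)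
  · intro x y hxy
    simp only [MonoidHom.comp_apply, hι, MonoidHom.inl_apply] at hxy
    have : e₂ (x, 1) = e₂ (y, 1) := Prod.ext hxy ((heι e₂ x).trans (heι e₂ y).symm)
    exact congrArg Prod.fst (he₂ this)
  · intro x y z
    simp only [MonoidHom.comp_apply]
    refine congrArg Prod.fst ?_
    have key : ∀ p : Fin 6 → H,
        ι ((MonoidHom.fst H K) (s (ι.compLeft (Fin 6) p))) = s (ι.compLeft (Fin 6) p) := by
      intro p
      have hp : (ι.compLeft (Fin 6) p) = fun i => ((p i, 1) : H × K) := rfl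
      rw [hp]
      exact Prod.ext rfl (hsι p).symm
    rw [key, key]
    have hv1 : ι.compLeft (Fin 6) ![x, y, x, z, y, z] = ![ι x, ι y, ι x, ι z, ι y, ι z] := by
      funext i; fin_cases i <;> rfl
    have hv2 : ι.compLeft (Fin 6) ![y, x, z, x, z, y] = ![ι y, ι x, ι z, ι x, ι z, ι y] := by
      funext i; fin_cases i <;> rfl
    rw [hv1, hv2, hsig (ι x) (ι y) (ι z)]

/-- If `H` and `K` are groups of finite coprime exponents and
`(H × K, ≠)` has a pseudo-Siggers polymorphism, then so do `(H, ≠)` and `(K, ≠)`. -/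
theorem stmt_4 (H K : Type) [Group H] [Group K]
    (hH : Monoid.exponent H ≠ 0) (hK : Monoid.exponent K ≠ 0)
    (hcop : Nat.Coprime (Monoid.exponent H) (Monoid.exponent K))
    (s : (Fin 6 → H × K) →* H × K)
    (hs : ∀ p q : Fin 6 → H × K, (∀ i, p i ≠ q i) → s p ≠ s q)
    (e₁ e₂ : H × K →* H × K)
    (he₁ : Function.Injective e₁) (he₂ : Function.Injective e₂)
    (hsig : ∀ x y z : H × K, e₁ (s ![x, y, x, z, y, z]) = e₂ (s ![y, x, z, x, z, y])) :
    (∃ (t : (Fin 6 → H) →* H) (a b : H →* H),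
      (∀ p q : Fin 6 → H, (∀ i, p i ≠ q i) → t p ≠ t q) ∧
      Function.Injective a ∧ Function.Injective b ∧
      (∀ x y z : H, a (t ![x, y, x, z, y, z]) = b (t ![y, x, z, x, z, y]))) ∧
    (∃ (t : (Fin 6 → K) →* K) (a b : K →* K),
      (∀ p q : Fin 6 → K, (∀ i, p i ≠ q i) → t p ≠ t q) ∧
      Function.Injective a ∧ Function.Injective b ∧
      (∀ x y z : K, a (t ![x, y, x, z, y, z]) = b (t ![y, x, z, x, z, y]))) := by
  constructor
  · exact aux_half hcop s hs e₁ e₂ he₁ he₂ hsig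
  · -- swap the factors
    set σ : H × K →* K × H := (MulEquiv.prodComm : H × K ≃* K × H).toMonoidHom with hσ
    set τ : K × H →* H × K := (MulEquiv.prodComm : K × H ≃* H × K).toMonoidHom with hτ
    have hσinj : Function.Injective σ := (MulEquiv.prodComm : H × K ≃* K × H).injective
    have hτinj : Function.Injective τ := (MulEquiv.prodComm : K × H ≃* H × K).injective
    set s' : (Fin 6 → K × H) →* K × H := σ.comp (s.comp (τ.compLeft (Fin 6))) with hs'def
    have hs' : ∀ p q : Fin 6 → K × H, (∀ i, p i ≠ q i) → s' p ≠ s' q := by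
      intro p q hpq hcon
      simp only [hs'def, MonoidHom.comp_apply] at hcon
      have := hσinj hcon
      exact hs _ _ (fun i h => hpq i (hτinj (by simpa using h))) this
    have hσt : ∀ g : K × H, σ (τ g) = g := fun g => rfl
    refine aux_half hcop.symm s' hs' (σ.comp (e₁.comp τ)) (σ.comp (e₂.comp τ))
      (hσinj.comp (he₁.comp hτinj)) (hσinj.comp (he₂.comp hτinj)) ?_
    intro x y z
    simp only [hs'def, MonoidHom.comp_apply]
    refine congrArg σ ?_
    have h1 : τ.compLeft (Fin 6) ![x, y, x, z, y, z] = ![τ x, τ y, τ x, τ z, τ y, τ z] := by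
      funext i; fin_cases i <;> rfl
    have h2 : τ.compLeft (Fin 6) ![y, x, z, x, z, y] = ![τ y, τ x, τ z, τ x, τ z, τ y] := by
      funext i; fin_cases i <;> rfl
    rw [h1, h2, show ∀ g, τ (σ g) = g from fun g => rfl, show ∀ g, τ (σ g) = g from fun g => rfl,
      hsig (τ x) (τ y) (τ z)]
end

section
/- Let M be a monoid, n ∈ ℕ, and f : (Fin n → M) →* M a monoid homomorphism (tuples with pointwise multiplication) that preserves ≠. Then for every k ∈ ℕ and every family P : Fin k → Set (Fin n) of pairwise disjoint sets whose union is all of Fin n (a partition of {1,…,n}), there exists j : Fin k such that the map M → M sending m to f (fun i => if i ∈ P j then m else 1) is injective. -/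
open Classical in
/-- For a ≠-preserving polymorphism `f` of a monoid and any partition of
the coordinates, some block `P j` yields an injective unary map `f_{P j}`. -/
theorem stmt_5 (M : Type) [Monoid M] (n : ℕ)
    (f : (Fin n → M) →* M)
    (hf : ∀ p q : Fin n → M, (∀ i, p i ≠ q i) → f p ≠ f q)
    (k : ℕ) (P : Fin k → Set (Fin n))
    (hdisj : Pairwise fun j j' => Disjoint (P j) (P j'))
    (hcover : (⋃ j, P j) = Set.univ) :
    ∃ j : Fin k,
      Function.Injective (fun m : M => f (fun i => if i ∈ P j then m else 1)) := by
  by_contra h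
  push_neg at h
  have h' : ∀ j, ∃ m m' : M,
      f (fun i => if i ∈ P j then m else 1) = f (fun i => if i ∈ P j then m' else 1)
      ∧ m ≠ m' := by
    intro j
    obtain ⟨m, m', hmm, hne⟩ := Function.not_injective_iff.mp (h j)
    exact ⟨m, m', hmm, hne⟩
  choose a b hab hne using h'
  have hmem : ∀ i : Fin n, ∃ j, i ∈ P j := by
    intro i
    have : i ∈ ⋃ j, P j := hcover ▸ Set.mem_univ i
    exact Set.mem_iUnion.mp this
  let jof : Fin n → Fin k := fun i => (hmem i).choose
  have hjof : ∀ i, i ∈ P (jof i) := fun i => (hmem i).choose_spec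
  have hnotmem : ∀ i (j' : Fin k), j' ≠ jof i → i ∉ P j' := by
    intro i j' hj' hmem'
    exact (hdisj hj').ne_of_mem hmem' (hjof i) rfl
  -- the block tuples, and the fact that they pairwise commute
  have gcomm : ∀ c : Fin k → M, ((Finset.univ : Finset (Fin k)) : Set (Fin k)).Pairwise
      (Function.onFun Commute (fun j => (fun i => if i ∈ P j then c j else 1 : Fin n → M))) := by
    intro c x _ y _ hxy
    funext i
    by_cases hx : i ∈ P x
    · have hy : i ∉ P y := fun hy => (hdisj hxy).ne_of_mem hx hy rfl
      simp [Pi.mul_apply, hx, hy]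
    · simp [Pi.mul_apply, hx]
  have key : ∀ c : Fin k → M,
      (fun i => c (jof i))
        = Finset.univ.noncommProd (fun j => (fun i => if i ∈ P j then c j else 1 : Fin n → M))
            (gcomm c) := by
    intro c
    funext i
    have hc : ((Finset.univ : Finset (Fin k)) : Set (Fin k)).Pairwise (Function.onFun Commute
        (fun j => Pi.evalMonoidHom (fun _ : Fin n => M) i (fun i' => if i' ∈ P j then c j else 1))) :=
      fun x hx y hy hxy => (gcomm c hx hy hxy).map _
    have : Pi.evalMonoidHom (fun _ : Fin n => M) i (Finset.univ.noncommProd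
        (fun j => (fun i' => if i' ∈ P j then c j else 1 : Fin n → M)) (gcomm c))
        = Finset.univ.noncommProd (fun j => Pi.evalMonoidHom (fun _ : Fin n => M) i
          (fun i' => if i' ∈ P j then c j else 1)) hc := Finset.map_noncommProd (Finset.univ)
      (fun j => (fun i' => if i' ∈ P j then c j else 1 : Fin n → M))
      (gcomm c) (Pi.evalMonoidHom (fun _ : Fin n => M) i)
    rw [show (Finset.univ.noncommProd
        (fun j => (fun i' => if i' ∈ P j then c j else 1 : Fin n → M)) (gcomm c)) i
        = Pi.evalMonoidHom (fun _ : Fin n => M) i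
          (Finset.univ.noncommProd
            (fun j => (fun i' => if i' ∈ P j then c j else 1 : Fin n → M)) (gcomm c)) from rfl,
      this]
    have hins : (Finset.univ : Finset (Fin k)) = insert (jof i) (Finset.univ.erase (jof i)) := by
      rw [Finset.insert_erase (Finset.mem_univ _)]
    rw [← Finset.mul_noncommProd_erase _ (Finset.mem_univ (jof i)) _ hc
        (hc.mono (Finset.coe_subset.mpr (Finset.erase_subset _ _))),
      Finset.noncommProd_eq_pow_card _ _ _ (1 : M), one_pow]
    · simp [Pi.evalMonoidHom, hjof i]
    · intro x hx
      have hne' : x ≠ jof i := (Finset.mem_erase.mp hx).1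
      simp [Pi.evalMonoidHom, hnotmem i x hne']
  have hfp : f (fun i => a (jof i)) = f (fun i => b (jof i)) := by
    rw [key a, key b, Finset.map_noncommProd _ _ (gcomm a) f, Finset.map_noncommProd _ _ (gcomm b) f]
    exact Finset.noncommProd_congr rfl (fun x _ => hab x) _
  exact hf _ _ (fun i => hne (jof i)) hfp
end

section
/- Let L be a first-order language having only function symbols and let M be an L-structure. Suppose there is a bijection e : M × M → M such that for every k-ary function symbol g of L and all x, y : Fin k → M, e (funMap g x, funMap g y) = funMap g (fun i => e (x i, y i)) (i.e., M × M with the coordinatewise structure is isomorphic to M). Then there exist a bijection s : (Fin 6 → M) → M commuting with every operation of M (for every k-ary function symbol g and every a : Fin k → (Fin 6 → M), s (fun j => funMap g (fun i => a i j)) = funMap g (fun i => s (a i))) and a bijection α : M → M commuting with every operation of M, such that α(s(x,y,x,z,y,z)) = s(y,x,z,x,z,y) for all x,y,z ∈ M. -/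
open FirstOrder Language

/-- An algebra (structure in a purely functional language) isomorphic to its
own square has a pseudo-Siggers polymorphism witnessed by an automorphism. -/
theorem stmt_8 (L : FirstOrder.Language) [L.IsAlgebraic]
    (M : Type) [L.Structure M]
    (e : M × M → M) (he : Function.Bijective e)
    (hcompat : ∀ (k : ℕ) (g : L.Functions k) (x y : Fin k → M),
      e (Structure.funMap g x, Structure.funMap g y) =
        Structure.funMap g (fun i => e (x i, y i))) :
    ∃ (s : (Fin 6 → M) → M) (α : M → M),
      Function.Bijective s ∧ Function.Bijective α ∧
      (∀ (k : ℕ) (g : L.Functions k) (a : Fin k → (Fin 6 → M)),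
        s (fun j => Structure.funMap g (fun i => a i j)) =
          Structure.funMap g (fun i => s (a i))) ∧
      (∀ (k : ℕ) (g : L.Functions k) (a : Fin k → M),
        α (Structure.funMap g a) = Structure.funMap g (fun i => α (a i))) ∧
      (∀ x y z : M, α (s ![x, y, x, z, y, z]) = s ![y, x, z, x, z, y]) := by
  classical
  obtain ⟨d, hde, hed⟩ := Function.bijective_iff_has_inverse.mp he
  set E : (Fin 6 → M) → M :=
    fun v => e (v 0, e (v 1, e (v 2, e (v 3, e (v 4, v 5))))) with hEdef
  set D : M → (Fin 6 → M) := fun m =>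
    ![ (d m).1, (d (d m).2).1, (d (d (d m).2).2).1,
       (d (d (d (d m).2).2).2).1,
       (d (d (d (d (d m).2).2).2).2).1,
       (d (d (d (d (d m).2).2).2).2).2 ] with hDdef
  have hdep : ∀ p : M × M, d (e p) = p := fun p => hde p
  have hedp : ∀ m : M, e (d m) = m := fun m => hed m
  have hDE : ∀ v, D (E v) = v := by
    intro v; funext j
    fin_cases j <;> simp [hDdef, hEdef, hdep] <;> rfl
  have hED : ∀ m, E (D m) = m := by
    intro m
    show e ((d m).1, e ((d (d m).2).1, e ((d (d (d m).2).2).1,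
      e ((d (d (d (d m).2).2).2).1,
        e ((d (d (d (d (d m).2).2).2).2).1, (d (d (d (d (d m).2).2).2).2).2))))) = m
    rw [show e ((d (d (d (d (d m).2).2).2).2).1, (d (d (d (d (d m).2).2).2).2).2)
        = (d (d (d (d m).2).2).2).2 from hedp _]
    rw [show e ((d (d (d (d m).2).2).2).1, (d (d (d (d m).2).2).2).2)
        = (d (d (d m).2).2).2 from hedp _]
    rw [show e ((d (d (d m).2).2).1, (d (d (d m).2).2).2)
        = (d (d m).2).2 from hedp _]
    rw [show e ((d (d m).2).1, (d (d m).2).2) = (d m).2 from hedp _]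
    rw [show e ((d m).1, (d m).2) = m from hedp _]
  have hEinj : Function.Injective E := fun v w h => by rw [← hDE v, h, hDE]
  have hE : ∀ (k : ℕ) (g : L.Functions k) (a : Fin k → Fin 6 → M),
      E (fun j => Structure.funMap g (fun i => a i j)) =
        Structure.funMap g (fun i => E (a i)) := by
    intro k g a
    simp only [hEdef, hcompat]
  have hD : ∀ (k : ℕ) (g : L.Functions k) (b : Fin k → M),
      D (Structure.funMap g b) = fun j => Structure.funMap g (fun i => D (b i) j) := by
    intro k g b
    apply hEinj
    rw [hED, hE]
    simp only [hED]
  set σ : Fin 6 → Fin 6 := ![1, 0, 3, 2, 5, 4] with hσdef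
  have hσσ : ∀ j, σ (σ j) = j := by decide
  set α : M → M := fun m => E (fun j => D m (σ j)) with hαdef
  have hαα : ∀ m, α (α m) = m := by
    intro m
    simp only [hαdef]
    have h1 : (fun j => D (E (fun j' => D m (σ j'))) (σ j))
        = (fun j => D m (σ (σ j))) := funext fun j => congrFun (hDE (fun j' => D m (σ j'))) (σ j)
    have h2 : (fun j => D m (σ (σ j))) = D m := funext fun j => by rw [hσσ]
    rw [h1, h2, hED]
  refine ⟨E, α, ⟨hEinj, fun m => ⟨D m, hED m⟩⟩,
    Function.Involutive.bijective hαα, hE, ?_, ?_⟩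
  · intro k g b
    simp only [hαdef, hD]
    exact hE k g fun i j => D (b i) (σ j)
  · intro x y z
    simp only [hαdef]
    have h0 : (fun j => D (E ![x, y, x, z, y, z]) (σ j))
        = (![y, x, z, x, z, y] : Fin 6 → M) := by
      funext j
      rw [show D (E ![x, y, x, z, y, z]) (σ j) = (![x, y, x, z, y, z] : Fin 6 → M) (σ j)
        from congrFun (hDE _) (σ j)]
      fin_cases j <;> rfl
    rw [h0]
end

section
/- Let p be a prime and let G be a countable abelian group of finite exponent in which every element has order a power of p. Then there exists an injective additive group homomorphism G × G →+ G if and only if there exists n ∈ ℕ such that G is bi-embeddable with ⨁_ℕ ZMod (p^n). -/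
open Function AddSubgroup

lemma ext_step {G A : Type} [AddCommGroup G] [AddCommGroup A]
    (H : AddSubgroup G) (x : G) (f : H →+ A) (y : A) (N : ℕ)
    (hx : (N : ℤ) • x ∈ H)
    (hy : (N : ℤ) • y = f ⟨(N : ℤ) • x, hx⟩)
    (hdvd : ∀ t : ℤ, t • x ∈ H → (N : ℤ) ∣ t) :
    ∃ f' : ↥(H ⊔ AddSubgroup.zmultiples x) →+ A,
      ∀ (g : ↥(H ⊔ AddSubgroup.zmultiples x)) (h : G) (hh : h ∈ H) (t : ℤ),
        (g : G) = h + t • x → f' g = f ⟨h, hh⟩ + t • y := by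
  classical
  set S := H ⊔ AddSubgroup.zmultiples x with hS
  let π : H × ℤ →+ G :=
    (H.subtype.comp (AddMonoidHom.fst _ _)) + ((zmultiplesHom G x).comp (AddMonoidHom.snd _ _))
  have hπ : ∀ a : H × ℤ, π a = (a.1 : G) + a.2 • x := fun a => rfl
  have hmem : ∀ a : H × ℤ, π a ∈ S := by
    intro a
    rw [hπ]
    exact add_mem (mem_sup_left a.1.2) (mem_sup_right (mem_zmultiples_iff.2 ⟨a.2, rfl⟩))
  let π' : H × ℤ →+ ↥S := π.codRestrict S hmem
  have hπ' : ∀ a : H × ℤ, (π' a : G) = (a.1 : G) + a.2 • x := fun a => rfl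
  have hsurj : Surjective π' := by
    rintro ⟨g, hg⟩
    rw [hS] at hg
    rcases mem_sup.1 hg with ⟨u, hu, v, hv, huv⟩
    rcases mem_zmultiples_iff.1 hv with ⟨t, rfl⟩
    exact ⟨(⟨u, hu⟩, t), Subtype.ext (by simpa [hπ'] using huv)⟩
  let φ : H × ℤ →+ A :=
    (f.comp (AddMonoidHom.fst _ _)) + ((zmultiplesHom A y).comp (AddMonoidHom.snd _ _))
  have hφ : ∀ a : H × ℤ, φ a = f a.1 + a.2 • y := fun a => rfl
  -- key: if π' a = 0 then φ a = 0
  have hker : ∀ a : H × ℤ, π' a = 0 → φ a = 0 := by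
    rintro ⟨h, t⟩ hk
    have h0 : (h : G) + t • x = 0 := by
      have := congrArg (Subtype.val) hk
      simpa [hπ'] using this
    have htx : t • x ∈ H := by
      have h1 : t • x = -(h : G) := eq_neg_of_add_eq_zero_right h0
      rw [h1]; exact neg_mem h.2
    rcases hdvd t htx with ⟨s, rfl⟩
    set z : H := ⟨(N : ℤ) • x, hx⟩ with hz
    have h1 : ((N : ℤ) * s) • y = f (s • z) := by
      rw [f.map_zsmul, ← hy, mul_comm, mul_smul]
    have h2 : h + s • z = 0 := by
      apply Subtype.ext
      have : ((h : G)) + s • ((N : ℤ) • x) = 0 := by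
        rw [← mul_smul, mul_comm]; exact h0
      simpa [hz] using this
    rw [hφ]
    simp only []
    rw [h1, ← f.map_add, h2, f.map_zero]
  -- build the lift
  let lift0 : (H × ℤ) ⧸ π'.ker →+ A :=
    QuotientAddGroup.lift π'.ker φ (fun a ha => hker a (AddMonoidHom.mem_ker.1 ha))
  let e := QuotientAddGroup.quotientKerEquivOfSurjective π' hsurj
  refine ⟨lift0.comp e.symm.toAddMonoidHom, ?_⟩
  intro g h hh t hg
  have hgeq : g = π' (⟨h, hh⟩, t) := Subtype.ext (by simpa [hπ'] using hg)
  have he : e (QuotientAddGroup.mk (⟨h, hh⟩, t)) = π' (⟨h, hh⟩, t) := rfl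
  rw [hgeq, ← he]
  simp only [AddMonoidHom.comp_apply, AddEquiv.coe_toAddMonoidHom, AddEquiv.symm_apply_apply]
  exact hφ _

lemma zmod_div (p n m : ℕ) (hp : p.Prime) (hm : m ≤ n) (a : ZMod (p ^ n))
    (ha : (p : ZMod (p ^ n)) ^ (n - m) * a = 0) :
    (p : ZMod (p ^ n)) ^ m * ((a.val / p ^ m : ℕ) : ZMod (p ^ n)) = a := by
  haveI : NeZero (p ^ n) := ⟨pow_ne_zero n hp.pos.ne'⟩
  have h1 : ((p ^ (n - m) * a.val : ℕ) : ZMod (p ^ n)) = 0 := by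
    push_cast
    rw [ZMod.natCast_val, ZMod.cast_id]
    exact ha
  have h2 : p ^ n ∣ p ^ (n - m) * a.val := (ZMod.natCast_eq_zero_iff _ _).1 h1
  obtain ⟨t, ht⟩ := h2
  have hnm : p ^ n = p ^ (n - m) * p ^ m := by rw [← pow_add]; congr 1; omega
  have h3 : a.val = p ^ m * t := by
    have hne : 0 < p ^ (n - m) := pow_pos hp.pos _
    apply Nat.eq_of_mul_eq_mul_left hne
    rw [ht, hnm, mul_assoc]
  have h4 : a.val / p ^ m = t := by
    rw [h3, Nat.mul_div_cancel_left _ (pow_pos hp.pos _)]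
  rw [h4]
  have : ((p ^ m * t : ℕ) : ZMod (p ^ n)) = a := by
    rw [← h3, ZMod.natCast_val, ZMod.cast_id]
  push_cast at this
  exact this


def Hchain {G : Type} [AddCommGroup G] (x : ℕ → G) : ℕ → AddSubgroup G
  | 0 => ⊥
  | (k+1) => Hchain x k ⊔ AddSubgroup.zmultiples (x k)

lemma Hchain_mono {G : Type} [AddCommGroup G] (x : ℕ → G) : Monotone (Hchain x) :=
  monotone_nat_of_le_succ (fun _ => le_sup_left)

theorem countable_bounded_embeds (p n : ℕ) (hp : p.Prime) (G : Type) [AddCommGroup G]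
    [Countable G] (hG : ∀ g : G, ((p ^ n : ℕ) : ℤ) • g = 0) :
    ∃ f : G →+ (ℕ →₀ ZMod (p ^ n)), Function.Injective f := by
  classical
  haveI : NeZero (p ^ n) := ⟨pow_ne_zero n hp.pos.ne'⟩
  obtain ⟨x, hx⟩ := exists_surjective_nat G
  set H : ℕ → AddSubgroup G := Hchain x with hHdef
  have hHsucc : ∀ k, H (k + 1) = H k ⊔ AddSubgroup.zmultiples (x k) := fun k => rfl
  have hmono : Monotone H := Hchain_mono x
  have hexh : ∀ g : G, ∃ k, g ∈ H k := by
    intro g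
    obtain ⟨j, rfl⟩ := hx g
    exact ⟨j + 1, by rw [hHsucc]; exact mem_sup_right (mem_zmultiples _)⟩
  -- the inductive step
  have step : ∀ k (f : ↥(H k) →+ (ℕ →₀ ZMod (p ^ n))), Function.Injective f →
      (∀ (g : ↥(H k)) (j : ℕ), k ≤ j → f g j = 0) →
      ∃ f' : ↥(H (k + 1)) →+ (ℕ →₀ ZMod (p ^ n)), Function.Injective f' ∧
        (∀ (g : ↥(H (k+1))) (j : ℕ), k + 1 ≤ j → f' g j = 0) ∧
        ∀ (g : G) (hg : g ∈ H k), f' ⟨g, hmono k.le_succ hg⟩ = f ⟨g, hg⟩ := by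
    intro k f hinj hbdd
    have hexm : ∃ m, ((p ^ m : ℕ) : ℤ) • x k ∈ H k :=
      ⟨n, by rw [hG]; exact zero_mem _⟩
    set m := Nat.find hexm with hm
    have hmem : ((p ^ m : ℕ) : ℤ) • x k ∈ H k := Nat.find_spec hexm
    have hmn : m ≤ n := Nat.find_le (by rw [hG]; exact zero_mem _)
    have hppow : (p : ℕ) ^ (n - m) * p ^ m = p ^ n := by rw [← pow_add]; congr 1; omega
    -- divisibility
    have hdvd : ∀ t : ℤ, t • x k ∈ H k → ((p ^ m : ℕ) : ℤ) ∣ t := by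
      intro t ht
      set T : AddSubgroup ℤ := AddSubgroup.comap (zmultiplesHom G (x k)) (H k) with hT
      obtain ⟨a, ha⟩ := Int.subgroup_cyclic T
      have hmemT : ∀ s : ℤ, s ∈ T ↔ s • x k ∈ H k := fun s => Iff.rfl
      have hdvdiff : ∀ s : ℤ, s ∈ T ↔ a ∣ s := by
        intro s
        rw [ha, AddSubgroup.mem_closure_singleton]
        constructor
        · rintro ⟨t, rfl⟩; exact ⟨t, by rw [zsmul_eq_mul, mul_comm]; simp⟩
        · rintro ⟨t, rfl⟩; exact ⟨t, by rw [zsmul_eq_mul, mul_comm]; simp⟩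
      have hpm : ((p ^ m : ℕ) : ℤ) ∈ T := hmem
      have hadvd : a ∣ ((p ^ m : ℕ) : ℤ) := (hdvdiff _).1 hpm
      have hnat : a.natAbs ∣ p ^ m := by
        have h := Int.natAbs_dvd_natAbs.2 hadvd
        rwa [Int.natAbs_natCast] at h
      obtain ⟨j, hj, hja⟩ := (Nat.dvd_prime_pow hp).1 hnat
      have hjm : j = m := by
        by_contra hne
        have hjlt : j < m := lt_of_le_of_ne hj hne
        have hmemj : ((p ^ j : ℕ) : ℤ) • x k ∈ H k := by
          have ha1 : a ∈ T := (hdvdiff a).2 dvd_rfl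
          have hna : (a.natAbs : ℤ) ∈ T := by
            rcases Int.natAbs_eq a with h | h
            · rw [← h]; exact ha1
            · rw [show ((a.natAbs : ℤ)) = -a by omega]; exact neg_mem ha1
          rw [hja] at hna
          exact hna
        exact Nat.find_min hexm hjlt hmemj
      subst hjm
      have hat : a ∣ t := (hdvdiff t).1 ht
      have h2 : ((a.natAbs : ℕ) : ℤ) ∣ t := Int.natAbs_dvd.2 hat
      rw [hja] at h2
      exact_mod_cast h2
    -- the element z and componentwise division
    set z : ↥(H k) := ⟨((p ^ m : ℕ) : ℤ) • x k, hmem⟩ with hzdef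
    have hz0 : ((p ^ (n - m) : ℕ) : ℤ) • f z = 0 := by
      have h2 : (((p ^ (n - m) : ℕ) : ℤ) • z : ↥(H k)) = 0 := by
        apply Subtype.ext
        show ((p ^ (n - m) : ℕ) : ℤ) • (((p ^ m : ℕ) : ℤ) • x k) = (0 : G)
        rw [smul_smul, ← Nat.cast_mul, hppow]
        exact hG (x k)
      rw [← map_zsmul f _ z, h2, map_zero]
    have hz0c : ∀ j : ℕ, (p : ZMod (p ^ n)) ^ (n - m) * (f z) j = 0 := by
      intro j
      have h4 : ((((p ^ (n - m) : ℕ) : ℤ) • f z) : ℕ →₀ ZMod (p ^ n)) j = 0 := by rw [hz0]; rfl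
      rw [Finsupp.smul_apply, zsmul_eq_mul] at h4
      rwa [show ((((p ^ (n - m) : ℕ) : ℤ)) : ZMod (p ^ n)) = (p : ZMod (p ^ n)) ^ (n - m)
        by push_cast; ring] at h4
    have hd00 : (((((0 : ZMod (p ^ n))).val / p ^ m : ℕ)) : ZMod (p ^ n)) = 0 := by
      rw [ZMod.val_zero, Nat.zero_div, Nat.cast_zero]
    set y0 : ℕ →₀ ZMod (p ^ n) :=
      Finsupp.mapRange (fun c => ((c.val / p ^ m : ℕ) : ZMod (p ^ n))) hd00 (f z) with hy0def
    have hy0 : ((p ^ m : ℕ) : ℤ) • y0 = f z := by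
      ext j
      rw [Finsupp.smul_apply, hy0def, Finsupp.mapRange_apply, zsmul_eq_mul,
        show ((((p ^ m : ℕ) : ℤ)) : ZMod (p ^ n)) = (p : ZMod (p ^ n)) ^ m by push_cast; ring]
      exact zmod_div p n m hp hmn ((f z) j) (hz0c j)
    have hy0supp : ∀ j : ℕ, (f z) j = 0 → y0 j = 0 := by
      intro j h
      rw [hy0def, Finsupp.mapRange_apply, h, hd00]
    set y : ℕ →₀ ZMod (p ^ n) := y0 + Finsupp.single k ((p : ZMod (p ^ n)) ^ (n - m)) with hydef
    have hpn0 : (p : ZMod (p ^ n)) ^ m * (p : ZMod (p ^ n)) ^ (n - m) = 0 := by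
      rw [← pow_add, show m + (n - m) = n by omega]
      have h := ZMod.natCast_self (p ^ n)
      push_cast at h
      exact h
    have hy : ((p ^ m : ℕ) : ℤ) • y = f z := by
      rw [hydef, smul_add, hy0]
      have hsing : ((p ^ m : ℕ) : ℤ) • Finsupp.single k ((p : ZMod (p ^ n)) ^ (n - m)) =
          (0 : ℕ →₀ ZMod (p ^ n)) := by
        rw [Finsupp.smul_single]
        have : ((p ^ m : ℕ) : ℤ) • ((p : ZMod (p ^ n)) ^ (n - m)) = 0 := by
          rw [zsmul_eq_mul, show ((((p ^ m : ℕ) : ℤ)) : ZMod (p ^ n)) = (p : ZMod (p ^ n)) ^ m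
            by push_cast; ring]
          exact hpn0
        rw [this, Finsupp.single_zero]
      rw [hsing, add_zero]
    obtain ⟨F', hF'⟩ := ext_step (H k) (x k) f y (p ^ m) hmem hy hdvd
    refine ⟨F'.comp (AddSubgroup.inclusion (le_of_eq (hHsucc k))), ?_⟩
    have spec' : ∀ (g : ↥(H (k + 1))) (h : G) (hh : h ∈ H k) (t : ℤ),
        (g : G) = h + t • x k →
        (F'.comp (AddSubgroup.inclusion (le_of_eq (hHsucc k)))) g = f ⟨h, hh⟩ + t • y :=
      fun g h hh t hg => hF' _ h hh t hg
    have hdecomp : ∀ g : ↥(H (k + 1)), ∃ (h : G) (hh : h ∈ H k) (t : ℤ),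
        (g : G) = h + t • x k := by
      intro g
      have hg2 : (g : G) ∈ H k ⊔ AddSubgroup.zmultiples (x k) := g.2
      rcases mem_sup.1 hg2 with ⟨u, hu, v, hv, huv⟩
      rcases mem_zmultiples_iff.1 hv with ⟨t, rfl⟩
      exact ⟨u, hu, t, huv.symm⟩
    have hyj0 : ∀ j : ℕ, k + 1 ≤ j → y j = 0 := by
      intro j hj
      rw [hydef, Finsupp.add_apply, hy0supp j (hbdd z j (by omega)),
        Finsupp.single_eq_of_ne' (by omega : k ≠ j), add_zero]
    have hextends : ∀ (g : G) (hg : g ∈ H k),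
        (F'.comp (AddSubgroup.inclusion (le_of_eq (hHsucc k)))) ⟨g, hmono k.le_succ hg⟩ =
        f ⟨g, hg⟩ := by
      intro g hg
      have h := spec' ⟨g, hmono k.le_succ hg⟩ g hg 0 (by simp)
      simpa using h
    refine ⟨?_, ?_, hextends⟩
    · rw [injective_iff_map_eq_zero]
      intro g hg0
      obtain ⟨h, hh, t, hgdec⟩ := hdecomp g
      have hg0' := hg0
      rw [spec' g h hh t hgdec] at hg0'
      have hk0 : (f ⟨h, hh⟩) k + t • (y k) = 0 := by
        have h6 := congrArg (fun w : ℕ →₀ ZMod (p ^ n) => w k) hg0'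
        simpa [Finsupp.add_apply, Finsupp.smul_apply] using h6
      rw [hbdd ⟨h, hh⟩ k le_rfl, zero_add] at hk0
      have hyk : y k = (p : ZMod (p ^ n)) ^ (n - m) := by
        rw [hydef, Finsupp.add_apply, hy0supp k (hbdd z k le_rfl), Finsupp.single_eq_same,
          zero_add]
      rw [hyk, zsmul_eq_mul] at hk0
      have hdt : ((p ^ m : ℕ) : ℤ) ∣ t := by
        have h5 : ((t * (p : ℤ) ^ (n - m) : ℤ) : ZMod (p ^ n)) = 0 := by
          push_cast
          exact hk0
        have h6 : ((p ^ n : ℕ) : ℤ) ∣ t * (p : ℤ) ^ (n - m) :=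
          (ZMod.intCast_zmod_eq_zero_iff_dvd _ _).1 h5
        obtain ⟨s, hs⟩ := h6
        refine ⟨s, ?_⟩
        have hsplit : ((p ^ n : ℕ) : ℤ) = ((p ^ m : ℕ) : ℤ) * (p : ℤ) ^ (n - m) := by
          push_cast
          rw [← pow_add]
          congr 1
          omega
        have hcan : t * (p : ℤ) ^ (n - m) = (((p ^ m : ℕ) : ℤ) * s) * (p : ℤ) ^ (n - m) := by
          rw [hs, hsplit]; ring
        exact mul_right_cancel₀
          (pow_ne_zero _ (by exact_mod_cast hp.pos.ne' : (p : ℤ) ≠ 0)) hcan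
      obtain ⟨s, rfl⟩ := hdt
      have hgH : (g : G) ∈ H k := by
        rw [hgdec]
        apply add_mem hh
        rw [mul_comm, mul_smul]
        exact AddSubgroup.zsmul_mem _ hmem s
      have hval : (F'.comp (AddSubgroup.inclusion (le_of_eq (hHsucc k)))) g =
          f ⟨(g : G), hgH⟩ := by
        rw [← hextends (g : G) hgH]
      have hfz : f ⟨(g : G), hgH⟩ = 0 := by rw [← hval]; exact hg0
      have h7 : (⟨(g : G), hgH⟩ : ↥(H k)) = 0 := (injective_iff_map_eq_zero _).1 hinj _ hfz
      apply Subtype.ext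
      have h9 := congrArg Subtype.val h7
      simpa using h9
    · intro g j hj
      obtain ⟨h, hh, t, hgdec⟩ := hdecomp g
      rw [spec' g h hh t hgdec, Finsupp.add_apply, Finsupp.smul_apply,
        hbdd ⟨h, hh⟩ j (by omega), hyj0 j hj, smul_zero, add_zero]
  -- build the chain of maps
  let Pkg : ℕ → Type := fun k =>
    {f : ↥(H k) →+ (ℕ →₀ ZMod (p ^ n)) //
      Function.Injective f ∧ ∀ (g : ↥(H k)) (j : ℕ), k ≤ j → f g j = 0}
  have base : Pkg 0 := by
    refine ⟨0, ?_, ?_⟩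
    · intro a b _
      apply Subtype.ext
      have ha : (a : G) ∈ (⊥ : AddSubgroup G) := a.2
      have hb : (b : G) ∈ (⊥ : AddSubgroup G) := b.2
      rw [AddSubgroup.mem_bot] at ha hb
      rw [ha, hb]
    · intro g j _
      rfl
  let stepF : ∀ k, Pkg k → Pkg (k + 1) := fun k Fk =>
    ⟨(step k Fk.1 Fk.2.1 Fk.2.2).choose,
     (step k Fk.1 Fk.2.1 Fk.2.2).choose_spec.1,
     (step k Fk.1 Fk.2.1 Fk.2.2).choose_spec.2.1⟩
  let F : ∀ k, Pkg k := fun k => Nat.rec base stepF k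
  have hext1 : ∀ (k : ℕ) (g : G) (hg : g ∈ H k),
      (F (k + 1)).1 ⟨g, hmono k.le_succ hg⟩ = (F k).1 ⟨g, hg⟩ := fun k g hg =>
    (step k (F k).1 (F k).2.1 (F k).2.2).choose_spec.2.2 g hg
  have hext : ∀ (k l : ℕ) (hkl : k ≤ l) (g : G) (hg : g ∈ H k),
      (F l).1 ⟨g, hmono hkl hg⟩ = (F k).1 ⟨g, hg⟩ := by
    intro k l hkl
    induction l, hkl using Nat.le_induction with
    | base => intro g hg; rfl
    | succ l hkl ih =>
      intro g hg
      have h1 := hext1 l g (hmono hkl hg)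
      rw [← ih g hg]
      exact h1
  choose K hK using hexh
  have hΦ : ∀ (g : G) (k : ℕ) (hg : g ∈ H k),
      (F (K g)).1 ⟨g, hK g⟩ = (F k).1 ⟨g, hg⟩ := by
    intro g k hg
    rcases le_total (K g) k with h | h
    · exact (hext (K g) k h g (hK g)).symm
    · exact hext k (K g) h g hg
  refine ⟨{ toFun := fun g => (F (K g)).1 ⟨g, hK g⟩, map_zero' := ?_, map_add' := ?_ }, ?_⟩
  · exact (hΦ 0 0 (zero_mem _)).trans (map_zero _)
  · intro a b
    set k := max (K a) (max (K b) (K (a + b))) with hk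
    have ha : a ∈ H k := hmono (le_max_left _ _) (hK a)
    have hb : b ∈ H k := hmono (le_trans (le_max_left _ _) (le_max_right _ _)) (hK b)
    have hab : a + b ∈ H k := hmono (le_trans (le_max_right _ _) (le_max_right _ _)) (hK (a + b))
    show (F (K (a + b))).1 ⟨a + b, hK (a + b)⟩ = (F (K a)).1 ⟨a, hK a⟩ + (F (K b)).1 ⟨b, hK b⟩
    rw [hΦ a k ha, hΦ b k hb, hΦ (a + b) k hab,
      show (⟨a + b, hab⟩ : ↥(H k)) = ⟨a, ha⟩ + ⟨b, hb⟩ from rfl]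
    exact map_add _ _ _
  · rw [injective_iff_map_eq_zero]
    intro a ha0
    have h8 : (F (K a)).1 ⟨a, hK a⟩ = 0 := ha0
    have h0 : (⟨a, hK a⟩ : ↥(H (K a))) = 0 :=
      (injective_iff_map_eq_zero _).1 (F (K a)).2.1 _ h8
    exact congrArg Subtype.val h0

theorem finsupp_embeds (p n : ℕ) (hp : p.Prime) (G : Type) [AddCommGroup G]
    (y : ℕ → G) (hy : ∀ i, ((p ^ n : ℕ) : ℤ) • y i = 0)
    (hind : ∀ (s : Finset ℕ) (c : ℕ → ℤ),
      (∑ i ∈ s, (c i * (p : ℤ) ^ (n - 1)) • y i) = 0 → ∀ i ∈ s, (p : ℤ) ∣ c i) :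
    ∃ g : (ℕ →₀ ZMod (p ^ n)) →+ G, Function.Injective g := by
  classical
  haveI : NeZero (p ^ n) := ⟨pow_ne_zero n hp.pos.ne'⟩
  let ψ : ℕ → (ZMod (p ^ n) →+ G) := fun i => ZMod.lift (p ^ n) ⟨zmultiplesHom G (y i), by
    simpa using hy i⟩
  have hψ : ∀ (i : ℕ) (c : ZMod (p ^ n)), ψ i c = ((c.val : ℕ) : ℤ) • y i := by
    intro i c
    have h1 : ((((c.val : ℕ) : ℤ)) : ZMod (p ^ n)) = c := by
      push_cast
      rw [ZMod.natCast_val, ZMod.cast_id]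
    conv_lhs => rw [← h1]
    rw [ZMod.lift_coe]
    rfl
  refine ⟨Finsupp.liftAddHom ψ, ?_⟩
  rw [injective_iff_map_eq_zero]
  intro d hd
  by_contra hne
  have hsupp : d.support.Nonempty := Finsupp.support_nonempty_iff.2 hne
  -- the relation
  have hrel : ∑ i ∈ d.support, (((d i).val : ℕ) : ℤ) • y i = 0 := by
    rw [Finsupp.liftAddHom_apply, Finsupp.sum] at hd
    rw [← hd]
    exact Finset.sum_congr rfl fun i _ => (hψ i (d i)).symm
  -- valuations
  set v : ℕ → ℕ := fun i => ((d i).val).factorization p with hv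
  set u : ℕ → ℕ := fun i => (d i).val / p ^ (v i) with hu
  have hmin := (d.support.image v).min'_mem (hsupp.image v)
  set k := (d.support.image v).min' (hsupp.image v) with hkdef
  obtain ⟨i0, hi0, hvi0⟩ := Finset.mem_image.1 hmin
  have hvge : ∀ i ∈ d.support, k ≤ v i := fun i hi =>
    Finset.min'_le _ _ (Finset.mem_image_of_mem v hi)
  have hval0 : ∀ i ∈ d.support, (d i).val ≠ 0 := by
    intro i hi
    rw [Ne, ZMod.val_eq_zero]
    exact Finsupp.mem_support_iff.1 hi
  have hkn : k ≤ n - 1 := by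
    by_contra hlt
    have h3 : n ≤ v i0 := by omega
    have h4' : p ^ (v i0) ∣ (d i0).val := Nat.ordProj_dvd (d i0).val p
    have h4 : p ^ n ∣ (d i0).val := dvd_trans (pow_dvd_pow p h3) h4' 
    have h5 : (d i0).val < p ^ n := ZMod.val_lt _
    have := Nat.le_of_dvd (Nat.pos_of_ne_zero (hval0 i0 hi0)) h4
    omega
  -- key coefficient identity
  have hkey : ∀ i ∈ d.support,
      (p : ℤ) ^ (n - 1 - k) * (((d i).val : ℕ) : ℤ) =
      (((u i : ℕ) : ℤ) * (p : ℤ) ^ (v i - k)) * (p : ℤ) ^ (n - 1) := by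
    intro i hi
    have hvalr : ((d i).val : ℤ) = (p : ℤ) ^ (v i) * ((u i : ℕ) : ℤ) := by
      exact_mod_cast (Nat.ordProj_mul_ordCompl_eq_self (d i).val p).symm
    rw [hvalr]
    have hexp : (n - 1 - k) + v i = (v i - k) + (n - 1) := by have := hvge i hi; omega
    calc (p : ℤ) ^ (n - 1 - k) * ((p : ℤ) ^ (v i) * ((u i : ℕ) : ℤ))
        = (p : ℤ) ^ ((n - 1 - k) + v i) * ((u i : ℕ) : ℤ) := by rw [pow_add]; ring
      _ = (p : ℤ) ^ ((v i - k) + (n - 1)) * ((u i : ℕ) : ℤ) := by rw [hexp]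
      _ = (((u i : ℕ) : ℤ) * (p : ℤ) ^ (v i - k)) * (p : ℤ) ^ (n - 1) := by rw [pow_add]; ring
  have hsum2 : ∑ i ∈ d.support,
      ((((u i : ℕ) : ℤ) * (p : ℤ) ^ (v i - k)) * (p : ℤ) ^ (n - 1)) • y i = 0 := by
    have h6 : ∑ i ∈ d.support,
        ((((u i : ℕ) : ℤ) * (p : ℤ) ^ (v i - k)) * (p : ℤ) ^ (n - 1)) • y i =
        (p : ℤ) ^ (n - 1 - k) • ∑ i ∈ d.support, (((d i).val : ℕ) : ℤ) • y i := by
      rw [Finset.smul_sum]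
      refine Finset.sum_congr rfl fun i hi => ?_
      rw [smul_smul, hkey i hi]
    rw [h6, hrel, smul_zero]
  have h7 := hind d.support (fun i => ((u i : ℕ) : ℤ) * (p : ℤ) ^ (v i - k)) hsum2 i0 hi0
  have h8 : (p : ℤ) ∣ ((u i0 : ℕ) : ℤ) := by
    have h9 : v i0 - k = 0 := by omega
    have h7' : (p : ℤ) ∣ ((u i0 : ℕ) : ℤ) * (p : ℤ) ^ (v i0 - k) := h7
    rwa [h9, pow_zero, mul_one] at h7' 
  have h10 : p ∣ u i0 := by exact_mod_cast h8
  exact Nat.not_dvd_ordCompl hp (hval0 i0 hi0) h10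


/-- A countable abelian `p`-group `G` of finite exponent satisfies
`G × G ↪ G` iff `G` is bi-embeddable with `⨁_ℕ ZMod (p^n)` for some `n`. -/
theorem stmt_9 (p : ℕ) (hp : p.Prime) (G : Type) [AddCommGroup G] [Countable G]
    (hexp : ∃ k : ℕ, 1 ≤ k ∧ ∀ x : G, k • x = 0)
    (hord : ∀ x : G, ∃ k : ℕ, addOrderOf x = p ^ k) :
    (∃ φ : G × G →+ G, Function.Injective φ) ↔
    (∃ n : ℕ,
      (∃ f : G →+ DirectSum ℕ (fun _ => ZMod (p ^ n)), Function.Injective f) ∧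
      (∃ g : DirectSum ℕ (fun _ => ZMod (p ^ n)) →+ G, Function.Injective g)) := by
  classical
  haveI : Fact p.Prime := ⟨hp⟩
  -- G has exponent a power of p
  have hbddZ : ∃ n : ℕ, ∀ x : G, ((p ^ n : ℕ) : ℤ) • x = 0 := by
    obtain ⟨k, hk1, hk⟩ := hexp
    refine ⟨k.factorization p, fun x => ?_⟩
    obtain ⟨e, he⟩ := hord x
    have h1 : addOrderOf x ∣ k := addOrderOf_dvd_of_nsmul_eq_zero (hk x)
    rw [he] at h1
    have h2 : e ≤ k.factorization p :=
      (Nat.Prime.pow_dvd_iff_le_factorization hp (by omega)).1 h1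
    have h3 : addOrderOf x ∣ p ^ (k.factorization p) := by
      rw [he]; exact pow_dvd_pow p h2
    have h4 : (p ^ (k.factorization p)) • x = 0 := addOrderOf_dvd_iff_nsmul_eq_zero.1 h3
    rw [natCast_zsmul]
    exact h4
  set n := Nat.find hbddZ with hndef
  have hn : ∀ x : G, ((p ^ n : ℕ) : ℤ) • x = 0 := Nat.find_spec hbddZ
  constructor
  · rintro ⟨φ, hφ⟩
    by_cases hG : Subsingleton G
    · -- trivial group: use n = 0
      haveI : Subsingleton (ZMod (p ^ 0)) := by rw [pow_zero]; exact inferInstance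
      haveI : Subsingleton (DirectSum ℕ (fun _ => ZMod (p ^ 0))) := inferInstance
      exact ⟨0, ⟨0, fun a b _ => Subsingleton.elim a b⟩,
        ⟨0, fun a b _ => Subsingleton.elim a b⟩⟩
    · -- nontrivial case
      have hn1 : 1 ≤ n := by
        rcases Nat.eq_zero_or_pos n with h0 | h1
        · exfalso
          apply hG
          constructor
          intro a b
          have ha : a = 0 := by have h := hn a; rw [h0, pow_zero] at h; simpa using h
          have hb : b = 0 := by have h := hn b; rw [h0, pow_zero] at h; simpa using h
          rw [ha, hb]
        · exact h1
      -- the subgroup p^{n-1}G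
      let μ : G →+ G := zsmulAddGroupHom ((p ^ (n - 1) : ℕ) : ℤ)
      have hμ : ∀ g : G, μ g = ((p ^ (n - 1) : ℕ) : ℤ) • g := fun g => rfl
      set V : AddSubgroup G := μ.range with hVdef
      -- V is a ZMod p vector space
      have hpV : ∀ v : ↥V, p • v = 0 := by
        rintro ⟨v, g, rfl⟩
        apply Subtype.ext
        show p • μ g = (0 : G)
        rw [hμ, ← natCast_zsmul (((p ^ (n - 1) : ℕ) : ℤ) • g) p, smul_smul, ← Nat.cast_mul,
          show p * p ^ (n - 1) = p ^ n by rw [← pow_succ']; congr 1; omega]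
        exact hn g
      haveI : Module (ZMod p) ↥V := AddCommGroup.zmodModule hpV
      haveI : Module.Free (ZMod p) ↥V := Module.Free.of_divisionRing _ _
      -- V is infinite
      have hVinf : Infinite ↥V := by
        by_contra hfin
        rw [not_infinite_iff_finite] at hfin
        -- injection V × V → V from φ
        have hmemφ : ∀ vw : ↥V × ↥V, φ ((vw.1 : G), (vw.2 : G)) ∈ V := by
          rintro ⟨⟨v, a, rfl⟩, ⟨w, b, rfl⟩⟩
          refine ⟨φ (a, b), ?_⟩
          rw [hμ, ← map_zsmul φ]
          rfl
        have hinj2 : Function.Injective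
            (fun vw : ↥V × ↥V => (⟨φ ((vw.1 : G), (vw.2 : G)), hmemφ vw⟩ : ↥V)) := by
          rintro ⟨a1, a2⟩ ⟨b1, b2⟩ hab
          have h5 := congrArg Subtype.val hab
          have h6 := hφ h5
          have h7 : ((a1 : G), (a2 : G)) = ((b1 : G), (b2 : G)) := h6
          ext
          · exact congrArg Prod.fst h7
          · exact congrArg Prod.snd h7
        have hcard := Nat.card_le_card_of_injective _ hinj2
        rw [Nat.card_prod] at hcard
        -- V is nontrivial
        obtain ⟨x0, hx0⟩ : ∃ x0 : G, ((p ^ (n - 1) : ℕ) : ℤ) • x0 ≠ 0 := by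
          have h8 := Nat.find_min hbddZ (show n - 1 < n by omega)
          push_neg at h8
          exact h8
        haveI : Nontrivial ↥V := by
          refine ⟨⟨⟨((p ^ (n - 1) : ℕ) : ℤ) • x0, ⟨x0, rfl⟩⟩, 0, ?_⟩⟩
          simp only [ne_eq, Subtype.ext_iff]
          exact hx0
        have h9 : 1 < Nat.card ↥V := Finite.one_lt_card_iff_nontrivial.2 inferInstance
        nlinarith
      -- basis of V
      set ι := Module.Free.ChooseBasisIndex (ZMod p) ↥V with hιdef
      set b : Module.Basis ι (ZMod p) ↥V := Module.Free.chooseBasis (ZMod p) ↥V with hbdef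
      haveI : Countable ι := (b.injective).countable
      haveI : Infinite ι := by
        by_contra hfinι
        rw [not_infinite_iff_finite] at hfinι
        haveI : Module.Finite (ZMod p) ↥V := Module.Finite.of_basis b
        haveI : Finite ↥V := Module.finite_of_finite (ZMod p)
        exact (not_finite ↥V)
      obtain ⟨dι⟩ := nonempty_denumerable ι
      haveI := dι
      let eι : ℕ ≃ ι := (Denumerable.eqv ι).symm
      have hbv : ∀ i : ℕ, ∃ a : G, ((p ^ (n - 1) : ℕ) : ℤ) • a = ((b (eι i) : ↥V) : G) := by
        intro i
        obtain ⟨a, ha⟩ := (b (eι i)).2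
        exact ⟨a, ha⟩
      choose yy hyy using hbv
      have hind : ∀ (s : Finset ℕ) (c : ℕ → ℤ),
          (∑ i ∈ s, (c i * (p : ℤ) ^ (n - 1)) • yy i) = 0 → ∀ i ∈ s, (p : ℤ) ∣ c i := by
        intro s c hsum i hi
        have hsum1 : ∑ j ∈ s, c j • ((b (eι j) : ↥V) : G) = 0 := by
          rw [← hsum]
          refine Finset.sum_congr rfl fun j _ => ?_
          rw [← hyy j, ← mul_smul, show ((p ^ (n - 1) : ℕ) : ℤ) = (p : ℤ) ^ (n - 1)
            by push_cast; ring]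
        have hsum2 : (∑ j ∈ s, c j • b (eι j) : ↥V) = 0 := by
          rw [← ZeroMemClass.coe_eq_zero (S' := V)]
          rw [← hsum1]
          rw [show ((∑ j ∈ s, c j • b (eι j) : ↥V) : G) = V.subtype (∑ j ∈ s, c j • b (eι j))
            from rfl, map_sum]
          refine Finset.sum_congr rfl fun j _ => ?_
          rfl
        have hsum3 : ∑ j ∈ s, ((c j : ZMod p)) • b (eι j) = 0 := by
          rw [← hsum2]
          exact Finset.sum_congr rfl fun j _ => Int.cast_smul_eq_zsmul (ZMod p) (c j) _
        have hli := (b.linearIndependent.comp eι eι.injective)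
        have h11 := linearIndependent_iff'.1 hli s (fun j => ((c j : ZMod p))) hsum3 i hi
        exact_mod_cast (ZMod.intCast_zmod_eq_zero_iff_dvd (c i) p).1 h11
      obtain ⟨gmap, hgmap⟩ := finsupp_embeds p n hp G yy (fun i => hn (yy i)) hind
      obtain ⟨fmap, hfmap⟩ := countable_bounded_embeds p n hp G hn
      refine ⟨n, ⟨(finsuppAddEquivDFinsupp).toAddMonoidHom.comp fmap, ?_⟩,
        ⟨gmap.comp ((finsuppAddEquivDFinsupp
          (ι := ℕ) (M := ZMod (p ^ n))).symm.toAddMonoidHom), ?_⟩⟩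
      · intro a b hab
        exact hfmap (finsuppAddEquivDFinsupp.injective hab)
      · intro a b hab
        exact finsuppAddEquivDFinsupp.symm.injective (hgmap hab)
  · rintro ⟨m, ⟨f, hf⟩, ⟨g, hg⟩⟩
    let e : (ℕ →₀ ZMod (p ^ m)) ≃+ DirectSum ℕ (fun _ => ZMod (p ^ m)) := finsuppAddEquivDFinsupp
    let e2 : (ℕ →₀ ZMod (p ^ m)) × (ℕ →₀ ZMod (p ^ m)) ≃+ ((ℕ ⊕ ℕ) →₀ ZMod (p ^ m)) :=
      Finsupp.sumFinsuppAddEquivProdFinsupp.symm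
    let e3 : ((ℕ ⊕ ℕ) →₀ ZMod (p ^ m)) ≃+ (ℕ →₀ ZMod (p ^ m)) :=
      Finsupp.domCongr Equiv.natSumNatEquivNat
    refine ⟨g.comp (e.toAddMonoidHom.comp (e3.toAddMonoidHom.comp (e2.toAddMonoidHom.comp
      ((e.symm.toAddMonoidHom.prodMap e.symm.toAddMonoidHom).comp (f.prodMap f))))), ?_⟩
    simp only [AddMonoidHom.coe_comp, AddMonoidHom.coe_prodMap, AddEquiv.coe_toAddMonoidHom]
    exact hg.comp (e.injective.comp (e3.injective.comp (e2.injective.comp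
      ((e.symm.injective.prodMap e.symm.injective).comp (hf.prodMap hf)))))
end

section
/- Let ι be a countable type and n : ι → ℕ with 1 ≤ n j for all j and with n bounded above (there is k with n j ≤ k for all j). Let G := ⨁_{j ∈ ι} ZMod (2 ^ n j) (the direct sum DirectSum ι (fun j => ZMod (2 ^ n j))). Let x ∈ G with x ≠ 0 and x + x = 0. Then there exists j₀ ∈ ι such that the quotient G ⧸ AddSubgroup.zmultiples x is isomorphic as an additive group to ZMod (2 ^ (n j₀ - 1)) × ⨁_{j ∈ ι, j ≠ j₀} ZMod (2 ^ n j). -/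
open AddSubgroup DirectSum


/-- Classification of 2-torsion in `ZMod (2^m)`. -/
lemma aux_two_torsion {m : ℕ} (hm : 1 ≤ m) {a : ZMod (2^m)} (h : a + a = 0) :
    a = 0 ∨ a = ((2^(m-1) : ℕ) : ZMod (2^m)) := by
  haveI : NeZero ((2:ℕ)^m) := ⟨by positivity⟩
  have hva : ((a.val : ℕ) : ZMod (2^m)) = a := ZMod.natCast_zmod_val a
  have h2 : ((2 * a.val : ℕ) : ZMod (2^m)) = 0 := by
    push_cast
    rw [two_mul, hva, h]
  have hdvd : (2:ℕ)^m ∣ 2 * a.val := (ZMod.natCast_eq_zero_iff _ _).mp h2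
  have hsplit : (2:ℕ)^m = 2 * 2^(m-1) := by
    rw [← pow_succ']
    congr 1
    omega
  obtain ⟨c, hc⟩ := hdvd
  have hc' : a.val = 2^(m-1) * c := by
    have : 2 * a.val = 2 * (2^(m-1) * c) := by rw [hc, hsplit]; ring
    omega
  have hlt : a.val < 2^m := ZMod.val_lt a
  have hc2 : c < 2 := by
    by_contra hcge
    push_neg at hcge
    have h1 : 2^(m-1) * 2 ≤ 2^(m-1) * c := Nat.mul_le_mul_left _ hcge
    have h2' : (2:ℕ)^(m-1) * 2 = 2^m := by rw [hsplit]; ring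
    omega
  have : c = 0 ∨ c = 1 := by omega
  rcases this with rfl | rfl
  · left; rw [← hva, hc']; simp
  · right; rw [← hva, hc']; simp

/-- Quotienting `ZMod (2^m) × H` by the multiples of `(2^(m-1), 0)`. -/
lemma aux_pure_quot (m : ℕ) (hm : 1 ≤ m) (H : Type) [AddCommGroup H] :
    Nonempty (((ZMod (2^m) × H) ⧸
        AddSubgroup.zmultiples ((((2^(m-1):ℕ) : ZMod (2^m))), (0:H))) ≃+
      ZMod (2^(m-1)) × H) := by
  haveI : NeZero ((2:ℕ)^m) := ⟨by positivity⟩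
  haveI : NeZero ((2:ℕ)^(m-1)) := ⟨by positivity⟩
  have hdvd : (2:ℕ)^(m-1) ∣ 2^m := pow_dvd_pow 2 (Nat.sub_le m 1)
  let c : ZMod (2^m) →+ ZMod (2^(m-1)) := (ZMod.castHom hdvd (ZMod (2^(m-1)))).toAddMonoidHom
  let f : ZMod (2^m) × H →+ ZMod (2^(m-1)) × H :=
    { toFun := fun p => (c p.1, p.2)
      map_zero' := by simp
      map_add' := by intro p q; simp [Prod.ext_iff] }
  have hfapp : ∀ p : ZMod (2^m) × H, f p = (c p.1, p.2) := fun _ => rfl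
  have hcnat : ∀ k : ℕ, c ((k : ZMod (2^m))) = (k : ZMod (2^(m-1))) := fun k =>
    map_natCast (ZMod.castHom hdvd (ZMod (2^(m-1)))) k
  have hsurj : Function.Surjective f := by
    intro ⟨b, h⟩
    refine ⟨(((b.val : ℕ) : ZMod (2^m)), h), ?_⟩
    rw [hfapp, hcnat, ZMod.natCast_zmod_val]
  have hker : f.ker = AddSubgroup.zmultiples ((((2^(m-1):ℕ) : ZMod (2^m))), (0:H)) := by
    ext ⟨p, q⟩
    rw [AddMonoidHom.mem_ker, hfapp, mem_zmultiples_iff]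
    simp only [Prod.ext_iff, Prod.fst_zero, Prod.snd_zero, Prod.smul_mk, smul_zero]
    constructor
    · rintro ⟨hp, rfl⟩
      have hvp : ((p.val : ℕ) : ZMod (2^m)) = p := ZMod.natCast_zmod_val p
      have hz : ((p.val : ℕ) : ZMod (2^(m-1))) = 0 := by
        rw [← hvp, hcnat] at hp
        exact hp
      obtain ⟨d, hd⟩ := (ZMod.natCast_eq_zero_iff _ _).mp hz
      refine ⟨(d:ℤ), ?_, rfl⟩
      rw [← hvp, hd]
      push_cast [zsmul_eq_mul]
      ring
    · rintro ⟨k, hk1, hk2⟩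
      refine ⟨?_, hk2.symm⟩
      rw [← hk1, map_zsmul, hcnat, ZMod.natCast_self, smul_zero]
  rw [← hker]
  exact ⟨QuotientAddGroup.quotientKerEquivOfSurjective f hsurj⟩



variable {ι : Type} {β : ι → Type} [∀ j, AddCommGroup (β j)]

/-- Shearing automorphism of a direct sum along `ψ` vanishing on coordinate `j₀`. -/
def auxShear (j₀ : ι) (ψ : β j₀ →+ (⨁ j, β j)) (hψ0 : ∀ c, (ψ c) j₀ = 0) :
    (⨁ j, β j) ≃+ (⨁ j, β j) where
  toFun g := g + ψ (g j₀)
  invFun g := g - ψ (g j₀)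
  left_inv g := by
    show g + ψ (g j₀) - ψ ((g + ψ (g j₀)) j₀) = g
    rw [DirectSum.add_apply, hψ0, add_zero]
    abel
  right_inv g := by
    show g - ψ (g j₀) + ψ ((g - ψ (g j₀)) j₀) = g
    rw [DirectSum.sub_apply, hψ0, sub_zero]
    abel
  map_add' g h := by
    show g + h + ψ ((g + h) j₀) = g + ψ (g j₀) + (h + ψ (h j₀))
    rw [DirectSum.add_apply, map_add]
    abel

lemma auxShear_apply (j₀ : ι) (ψ : β j₀ →+ (⨁ j, β j)) (hψ0 : ∀ c, (ψ c) j₀ = 0) (g : ⨁ j, β j) :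
    auxShear j₀ ψ hψ0 g = g + ψ (g j₀) := rfl

/-- Decomposition of a direct sum by splitting off coordinate `j₀`. -/
noncomputable def auxDecomp [DecidableEq ι] (j₀ : ι) :
    (⨁ j, β j) ≃+ β j₀ × ⨁ (b : {j : ι // j ≠ j₀}), β b.1 :=
  (DirectSum.equivCongrLeft (Equiv.optionSubtypeNe j₀).symm).trans
    DirectSum.addEquivProdDirectSum

lemma auxDecomp_of_same [DecidableEq ι] (j₀ : ι) (a : β j₀) :
    auxDecomp j₀ (DirectSum.of β j₀ a) = (a, 0) := by
  refine Prod.ext ?_ (DFinsupp.ext fun b => ?_)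
  · show (DirectSum.equivCongrLeft (β := β) (Equiv.optionSubtypeNe j₀).symm
      (DirectSum.of β j₀ a)) none = a
    rw [DirectSum.equivCongrLeft_apply]
    exact DirectSum.of_eq_same j₀ a
  · show (DirectSum.equivCongrLeft (β := β) (Equiv.optionSubtypeNe j₀).symm
      (DirectSum.of β j₀ a)) (some b) = ((a, (0 : ⨁ (b : {j : ι // j ≠ j₀}), β b.1))).2 b
    rw [DirectSum.equivCongrLeft_apply]
    show _ = (0 : ⨁ (b : {j : ι // j ≠ j₀}), β b.1) b
    rw [DirectSum.zero_apply]
    exact DirectSum.of_eq_of_ne _ _ _ (fun hc => b.2 hc)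


/-- The quotient of a countable abelian 2-group of finite exponent
`⨁_{j ∈ ι} ZMod (2 ^ n j)` by the subgroup generated by an involution `x`. -/
theorem stmt_10 (ι : Type) [Countable ι] (n : ι → ℕ)
    (hn : ∀ j, 1 ≤ n j) (hbd : ∃ k : ℕ, ∀ j, n j ≤ k)
    (x : DirectSum ι (fun j => ZMod (2 ^ n j)))
    (hx : x ≠ 0) (hx2 : x + x = 0) :
    ∃ j₀ : ι,
      Nonempty
        ((DirectSum ι (fun j => ZMod (2 ^ n j)) ⧸ AddSubgroup.zmultiples x) ≃+
          (ZMod (2 ^ (n j₀ - 1)) ×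
            DirectSum {j : ι // j ≠ j₀} (fun j => ZMod (2 ^ n j.1)))) := by
  classical
  have hx2' : ∀ j, x j + x j = 0 := by
    intro j
    rw [← DirectSum.add_apply, hx2, DirectSum.zero_apply]
  have hxne : ∃ j, x j ≠ 0 := by
    by_contra h
    push_neg at h
    exact hx (DFinsupp.ext fun j' => by
      rw [h j']; exact (DirectSum.zero_apply (β := fun j => ZMod (2 ^ n j)) j').symm)
  obtain ⟨j, hj⟩ := hxne
  have hPex : ∃ k : ℕ, ∃ j, x j ≠ 0 ∧ n j = k := ⟨n j, j, hj, rfl⟩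
  obtain ⟨j₀, hj₀, hj₀n⟩ := Nat.find_spec hPex
  have hmin : ∀ j', x j' ≠ 0 → n j₀ ≤ n j' := fun j' hj' =>
    hj₀n ▸ Nat.find_min' hPex ⟨j', hj', rfl⟩
  refine ⟨j₀, ?_⟩
  set a : ZMod (2 ^ n j₀) := ((2^(n j₀ - 1) : ℕ) : ZMod (2^(n j₀))) with ha
  set x₀ := DirectSum.of (fun j => ZMod (2 ^ n j)) j₀ a with hx₀
  -- the element z with 2^(n j₀ - 1) • z = x - x₀
  set z : DirectSum ι (fun j => ZMod (2 ^ n j)) := DFinsupp.mapRange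
      (fun j (v : ZMod (2 ^ n j)) =>
        if j = j₀ then 0 else if v = 0 then 0 else ((2^(n j - n j₀) : ℕ) : ZMod (2 ^ n j)))
      (fun j => by simp) x with hz
  have hzapp : ∀ j', z j' = if j' = j₀ then 0 else
      if x j' = 0 then 0 else ((2^(n j' - n j₀) : ℕ) : ZMod (2 ^ n j')) := by
    intro j'
    rw [hz]
    exact DFinsupp.mapRange_apply _ _ x j'
  have hzj₀ : z j₀ = 0 := by rw [hzapp]; simp
  have hMz : (zmultiplesHom _ z) ((2 ^ n j₀ : ℕ) : ℤ) = 0 := by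
    refine DFinsupp.ext fun j' => ?_
    rw [zmultiplesHom_apply]
    show ((2 ^ n j₀ : ℕ) : ℤ) • z j' =
      (0 : DirectSum ι (fun j => ZMod (2 ^ n j))) j'
    rw [DirectSum.zero_apply, hzapp]
    by_cases h1 : j' = j₀
    · simp [h1]
    · rw [if_neg h1]
      by_cases h2 : x j' = 0
      · simp [h2]
      · rw [if_neg h2, natCast_zsmul, nsmul_eq_mul, ← Nat.cast_mul, ← pow_add]
        have he : n j₀ + (n j' - n j₀) = n j' := by
          have := hmin j' h2; omega
        rw [he, ZMod.natCast_self]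
  set ψ : ZMod (2 ^ n j₀) →+ DirectSum ι (fun j => ZMod (2 ^ n j)) :=
    ZMod.lift (2 ^ n j₀) ⟨zmultiplesHom _ z, hMz⟩ with hψ
  have hψint : ∀ k : ℤ, ψ ((k : ℤ) : ZMod (2 ^ n j₀)) = k • z := fun k => ZMod.lift_coe _ _ k
  have hψ0 : ∀ c : ZMod (2 ^ n j₀), (ψ c) j₀ = 0 := by
    intro c
    obtain ⟨k, rfl⟩ := ZMod.intCast_surjective c
    rw [hψint]
    show (k • z) j₀ = 0
    rw [DFinsupp.smul_apply, hzj₀, smul_zero]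
  set φ := auxShear (β := fun j => ZMod (2 ^ n j)) j₀ ψ hψ0 with hφ
  have hxj₀ : x j₀ = a := by
    rcases aux_two_torsion (hn j₀) (hx2' j₀) with h0 | h1
    · exact absurd h0 hj₀
    · exact h1
  have hφx₀ : φ x₀ = x := by
    rw [hφ, auxShear_apply]
    have h1 : x₀ j₀ = a := by rw [hx₀]; exact DirectSum.of_eq_same (β := fun j => ZMod (2 ^ n j)) j₀ a
    have h2 : ψ a = ((2^(n j₀ - 1) : ℕ) : ℤ) • z := by
      rw [← hψint]
      congr 1
      rw [ha]
      push_cast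
      ring
    rw [h1, h2]
    refine DFinsupp.ext fun j' => ?_
    show x₀ j' + (((2^(n j₀ - 1) : ℕ) : ℤ) • z) j' = x j'
    rw [DFinsupp.smul_apply, hzapp]
    by_cases hj' : j' = j₀
    · subst hj'
      rw [if_pos rfl, smul_zero, add_zero, h1, hxj₀]
    · rw [if_neg hj', hx₀, DirectSum.of_eq_of_ne _ _ _ (fun h => hj' h)]
      by_cases h2 : x j' = 0
      · simp [h2]
      · rw [if_neg h2, zero_add, natCast_zsmul, nsmul_eq_mul, ← Nat.cast_mul, ← pow_add]
        have he : n j₀ - 1 + (n j' - n j₀) = n j' - 1 := by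
          have := hmin j' h2
          have := hn j₀
          omega
        rw [he]
        rcases aux_two_torsion (hn j') (hx2' j') with h0 | h1
        · exact absurd h0 h2
        · exact h1.symm
  set E := φ.symm.trans (auxDecomp (β := fun j => ZMod (2 ^ n j)) j₀) with hE
  have hEx : E x = (a, 0) := by
    have h1 : φ.symm x = x₀ := by rw [← hφx₀, AddEquiv.symm_apply_apply]
    show auxDecomp j₀ (φ.symm x) = (a, 0)
    rw [h1, hx₀, auxDecomp_of_same]
  have hmap : (zmultiples x).map (E : DirectSum ι (fun j => ZMod (2 ^ n j)) →+ _) =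
      zmultiples ((a, 0) :
        ZMod (2 ^ n j₀) × DirectSum {j : ι // j ≠ j₀} (fun b => ZMod (2 ^ n b.1))) := by
    rw [AddMonoidHom.map_zmultiples]
    have h1 : (E : DirectSum ι (fun j => ZMod (2 ^ n j)) →+ ZMod (2 ^ n j₀) ×
        DirectSum {j : ι // j ≠ j₀} (fun b => ZMod (2 ^ n b.1))) x = (a, 0) := by
      simpa using hEx
    rw [h1]
  obtain ⟨Q⟩ := aux_pure_quot (n j₀) (hn j₀)
    (DirectSum {j : ι // j ≠ j₀} (fun b => ZMod (2 ^ n b.1)))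
  exact ⟨(QuotientAddGroup.congr (zmultiples x) (zmultiples (a, 0)) E hmap).trans Q⟩
end

section
/- Let n ≥ 1 and let G := (⨁_ℕ ZMod n) × ZMod (2*n). Then there exist an additive group homomorphism f : (Fin 6 → G) →+ G (tuples with pointwise addition) that preserves ≠, and an additive group automorphism α : G ≃+ G, such that α(f(x,y,x,z,y,z)) = f(y,x,z,x,z,y) for all x,y,z ∈ G. In particular, ((⨁_ℕ ZMod n) × ZMod (2*n), ≠) has a pseudo-Siggers polymorphism. -/
namespace Stmt12

open DirectSum

def sig (k : ℕ) : ℕ := if k % 3 = 2 then k - 2 else k + 1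

lemma sig_sig_sig (k : ℕ) : sig (sig (sig k)) = k := by
  unfold sig; split_ifs <;> omega

variable (n : ℕ)

abbrev A := DirectSum ℕ (fun _ : ℕ => ZMod n)

def sh (g : ℕ → ℕ) : A n →+ A n :=
  toAddMonoid fun i => of (fun _ : ℕ => ZMod n) (g i)

@[simp] lemma sh_of (g : ℕ → ℕ) (i : ℕ) (m : ZMod n) :
    sh n g (of (fun _ : ℕ => ZMod n) i m) = of (fun _ : ℕ => ZMod n) (g i) m :=
  toAddMonoid_of _ _ _

lemma sh_sh (g h : ℕ → ℕ) (a : A n) : sh n g (sh n h a) = sh n (g ∘ h) a := by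
  have : (sh n g).comp (sh n h) = sh n (g ∘ h) :=
    DirectSum.addHom_ext fun i m => by simp [sh_of]
  exact DFunLike.congr_fun this a

lemma sh_id (a : A n) : sh n (fun k => k) a = a := by
  have : sh n (fun k => k) = AddMonoidHom.id (A n) :=
    DirectSum.addHom_ext fun i m => by simp [sh_of]
  simpa using DFunLike.congr_fun this a

def Ext (r : ℕ) : A n →+ A n :=
  toAddMonoid fun k => if k % 6 = r then of (fun _ : ℕ => ZMod n) (k / 6) else 0

lemma Ext_of (r k : ℕ) (m : ZMod n) :
    Ext n r (of (fun _ : ℕ => ZMod n) k m)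
      = if k % 6 = r then of (fun _ : ℕ => ZMod n) (k / 6) m else 0 := by
  rw [Ext, toAddMonoid_of]; split_ifs <;> rfl

def Slot (t : ℕ) : A n →+ ZMod n :=
  toAddMonoid fun k => if k = t then AddMonoidHom.id (ZMod n) else 0

lemma Slot_of (t k : ℕ) (m : ZMod n) :
    Slot n t (of (fun _ : ℕ => ZMod n) k m) = if k = t then m else 0 := by
  rw [Slot, toAddMonoid_of]; split_ifs <;> rfl

lemma Ext_sh_eq (c : ℕ) (hc : c < 6) (a : A n) :
    Ext n c (sh n (fun i => 6 * i + c) a) = a := by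
  have : (Ext n c).comp (sh n (fun i => 6 * i + c)) = AddMonoidHom.id (A n) := by
    refine DirectSum.addHom_ext fun i m => ?_
    have h1 : (6 * i + c) % 6 = c := by omega
    have h2 : (6 * i + c) / 6 = i := by omega
    simp [sh_of, Ext_of, h1, h2]
  simpa using DFunLike.congr_fun this a

lemma Ext_sh_ne (r c : ℕ) (hc : c < 6) (h : c ≠ r) (a : A n) :
    Ext n r (sh n (fun i => 6 * i + c) a) = 0 := by
  have : (Ext n r).comp (sh n (fun i => 6 * i + c)) = 0 := by
    refine DirectSum.addHom_ext fun i m => ?_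
    have h1 : ¬ ((6 * i + c) % 6 = r) := by omega
    simp [sh_of, Ext_of, h1, show ¬ (c % 6 = r) by omega]
  simpa using DFunLike.congr_fun this a

lemma Ext_of_ne (r t : ℕ) (h : ¬ (t % 6 = r)) (x : ZMod n) :
    Ext n r (of (fun _ : ℕ => ZMod n) t x) = 0 := by
  rw [Ext_of, if_neg h]

lemma Slot_sh (t c : ℕ) (hc : c < 6) (ht : t < 6) (h : c ≠ t) (a : A n) :
    Slot n t (sh n (fun i => 6 * i + c) a) = 0 := by
  have : (Slot n t).comp (sh n (fun i => 6 * i + c)) = 0 := by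
    refine DirectSum.addHom_ext fun i m => ?_
    have h1 : ¬ (6 * i + c = t) := by omega
    simp [sh_of, Slot_of, h1]
  simpa using DFunLike.congr_fun this a

lemma Slot_of_eq (t : ℕ) (x : ZMod n) : Slot n t (of (fun _ : ℕ => ZMod n) t x) = x := by
  rw [Slot_of, if_pos rfl]

lemma Slot_of_ne (t k : ℕ) (h : ¬ (k = t)) (x : ZMod n) :
    Slot n t (of (fun _ : ℕ => ZMod n) k x) = 0 := by
  rw [Slot_of, if_neg h]

def tau : ZMod (2 * n) →+ ZMod n :=
  (ZMod.castHom (dvd_mul_left n 2) (ZMod n)).toAddMonoidHom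

lemma tau_ker (hn : 1 ≤ n) (b : ZMod (2 * n)) (hb : b ≠ 0) (h : tau n b = 0) :
    b = (n : ZMod (2 * n)) := by
  haveI : NeZero (2 * n) := ⟨by omega⟩
  haveI : NeZero n := ⟨by omega⟩
  have hval : ((b.val : ℕ) : ZMod n) = 0 := by
    rw [tau] at h
    rw [ZMod.natCast_val]
    simpa [ZMod.castHom_apply] using h
  have hdvd : n ∣ b.val := (ZMod.natCast_eq_zero_iff _ _).mp hval
  have hlt : b.val < 2 * n := b.val_lt
  have hne : b.val ≠ 0 := fun h0 => hb ((ZMod.val_eq_zero b).mp h0)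
  have hbn : b.val = n := by
    obtain ⟨c, hc⟩ := hdvd
    rcases Nat.lt_or_ge c 2 with h2 | h2
    · interval_cases c <;> omega
    · have : n * 2 ≤ n * c := Nat.mul_le_mul_left _ h2
      omega
  calc b = ((b.val : ℕ) : ZMod (2 * n)) := (ZMod.natCast_rightInverse b).symm
    _ = (n : ZMod (2 * n)) := by rw [hbn]

lemma three_n (hn : 1 ≤ n) :
    ((n : ZMod (2 * n)) + n + n) ≠ 0 := by
  have h : ((n : ZMod (2 * n)) + n + n) = ((3 * n : ℕ) : ZMod (2 * n)) := by
    push_cast; ring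
  rw [h]
  intro h0
  obtain ⟨c, hc⟩ := (ZMod.natCast_eq_zero_iff _ _).mp h0
  rcases Nat.lt_or_ge c 2 with h2 | h2
  · interval_cases c <;> omega
  · have : 2 * n * 2 ≤ 2 * n * c := Nat.mul_le_mul_left _ h2
    omega

abbrev G := A n × ZMod (2 * n)

def e1 : G n →+ G n :=
  AddMonoidHom.mk'
    (fun g => (sh n (fun i => 6 * i + 0) g.1 + of (fun _ : ℕ => ZMod n) 3 (tau n g.2), g.2))
    (by
      intro a b
      simp only [Prod.fst_add, Prod.snd_add, map_add, Prod.mk_add_mk, Prod.mk.injEq]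
      exact ⟨by abel, trivial⟩)

def alpha : G n ≃+ G n where
  toFun g := (sh n sig g.1, g.2)
  invFun g := (sh n (sig ∘ sig) g.1, g.2)
  left_inv g := by
    have : sh n (sig ∘ sig) (sh n sig g.1) = g.1 := by
      rw [sh_sh]
      have h : (sig ∘ sig) ∘ sig = fun k => k := funext fun k => sig_sig_sig k
      rw [h, sh_id]
    exact Prod.ext this rfl
  right_inv g := by
    have : sh n sig (sh n (sig ∘ sig) g.1) = g.1 := by
      rw [sh_sh]
      have h : sig ∘ (sig ∘ sig) = fun k => k := funext fun k => sig_sig_sig k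
      rw [h, sh_id]
    exact Prod.ext this rfl
  map_add' a b := by
    simp only [Prod.fst_add, Prod.snd_add, map_add, Prod.mk_add_mk]

lemma alpha_cube (g : G n) : alpha n (alpha n (alpha n g)) = g := by
  have : sh n sig (sh n sig (sh n sig g.1)) = g.1 := by
    rw [sh_sh, sh_sh]
    have h : (sig ∘ sig) ∘ sig = fun k => k := funext fun k => sig_sig_sig k
    rw [h, sh_id]
  exact Prod.ext this rfl

def f : (Fin 6 → G n) →+ G n :=
  AddMonoidHom.mk'
    (fun p => e1 n (p 0) + alpha n (e1 n (p 3)) + alpha n (alpha n (e1 n (p 4))))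
    (by
      intro p q
      simp only [Pi.add_apply, map_add]
      abel)

lemma hc1 : sig ∘ (fun i => 6 * i + 0) = fun i => 6 * i + 1 := by
  funext i; simp only [Function.comp, sig]
  rw [if_neg (by omega)]

lemma hc2 : sig ∘ (fun i => 6 * i + 1) = fun i => 6 * i + 2 := by
  funext i; simp only [Function.comp, sig]
  rw [if_neg (by omega)]

lemma sig3 : sig 3 = 4 := by norm_num [sig]
lemma sig4 : sig 4 = 5 := by norm_num [sig]

lemma A0 (g : G n) :
    (e1 n g).1 = sh n (fun i => 6 * i + 0) g.1 + of (fun _ : ℕ => ZMod n) 3 (tau n g.2) := rfl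

lemma A1 (g : G n) :
    (alpha n (e1 n g)).1
      = sh n (fun i => 6 * i + 1) g.1 + of (fun _ : ℕ => ZMod n) 4 (tau n g.2) := by
  show sh n sig (sh n (fun i => 6 * i + 0) g.1 + of (fun _ : ℕ => ZMod n) 3 (tau n g.2)) = _
  rw [map_add, sh_sh, hc1, sh_of, sig3]

lemma A2 (g : G n) :
    (alpha n (alpha n (e1 n g))).1
      = sh n (fun i => 6 * i + 2) g.1 + of (fun _ : ℕ => ZMod n) 5 (tau n g.2) := by
  show sh n sig ((alpha n (e1 n g)).1) = _
  rw [A1, map_add, sh_sh, hc2, sh_of, sig4]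

end Stmt12

/-- For `n ≥ 1`, the group `(⨁_ℕ ZMod n) × ZMod (2*n)` with `≠` has a
pseudo-Siggers polymorphism, witnessed by an automorphism. -/
theorem stmt_12 (n : ℕ) (hn : 1 ≤ n) :
    ∃ (f : (Fin 6 → (DirectSum ℕ (fun _ => ZMod n)) × ZMod (2 * n)) →+
            (DirectSum ℕ (fun _ => ZMod n)) × ZMod (2 * n))
      (α : (DirectSum ℕ (fun _ => ZMod n)) × ZMod (2 * n) ≃+
            (DirectSum ℕ (fun _ => ZMod n)) × ZMod (2 * n)),
      (∀ p q : Fin 6 → (DirectSum ℕ (fun _ => ZMod n)) × ZMod (2 * n),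
        (∀ i, p i ≠ q i) → f p ≠ f q) ∧
      (∀ x y z : (DirectSum ℕ (fun _ => ZMod n)) × ZMod (2 * n),
        α (f ![x, y, x, z, y, z]) = f ![y, x, z, x, z, y]) := by
  refine ⟨Stmt12.f n, Stmt12.alpha n, ?_, ?_⟩
  · intro p q hpq hEq
    set u : Stmt12.G n := p 0 - q 0 with hu
    set v : Stmt12.G n := p 3 - q 3 with hv
    set w : Stmt12.G n := p 4 - q 4 with hw
    have hd : Stmt12.f n (p - q) = 0 := by rw [map_sub, hEq, sub_self]
    have hd' : Stmt12.e1 n u + Stmt12.alpha n (Stmt12.e1 n v)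
        + Stmt12.alpha n (Stmt12.alpha n (Stmt12.e1 n w)) = 0 := hd
    have h1 : Stmt12.sh n (fun i => 6 * i + 0) u.1
          + DirectSum.of (fun _ : ℕ => ZMod n) 3 (Stmt12.tau n u.2)
        + (Stmt12.sh n (fun i => 6 * i + 1) v.1
          + DirectSum.of (fun _ : ℕ => ZMod n) 4 (Stmt12.tau n v.2))
        + (Stmt12.sh n (fun i => 6 * i + 2) w.1
          + DirectSum.of (fun _ : ℕ => ZMod n) 5 (Stmt12.tau n w.2)) = 0 := by
      have := congrArg Prod.fst hd'
      simpa only [Prod.fst_add, Prod.fst_zero, Stmt12.A2, Stmt12.A1, Stmt12.A0] using this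
    have h2 : u.2 + v.2 + w.2 = 0 := congrArg Prod.snd hd'
    have eu : u.1 = 0 := by
      have h := congrArg (Stmt12.Ext n 0) h1
      rw [map_add, map_add, map_add, map_add, map_add, map_zero,
        Stmt12.Ext_sh_eq n 0 (by omega), Stmt12.Ext_sh_ne n 0 1 (by omega) (by omega),
        Stmt12.Ext_sh_ne n 0 2 (by omega) (by omega),
        Stmt12.Ext_of_ne n 0 3 (by omega), Stmt12.Ext_of_ne n 0 4 (by omega),
        Stmt12.Ext_of_ne n 0 5 (by omega)] at h
      simpa using h
    have ev : v.1 = 0 := by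
      have h := congrArg (Stmt12.Ext n 1) h1
      rw [map_add, map_add, map_add, map_add, map_add, map_zero,
        Stmt12.Ext_sh_eq n 1 (by omega), Stmt12.Ext_sh_ne n 1 0 (by omega) (by omega),
        Stmt12.Ext_sh_ne n 1 2 (by omega) (by omega),
        Stmt12.Ext_of_ne n 1 3 (by omega), Stmt12.Ext_of_ne n 1 4 (by omega),
        Stmt12.Ext_of_ne n 1 5 (by omega)] at h
      simpa using h
    have ew : w.1 = 0 := by
      have h := congrArg (Stmt12.Ext n 2) h1
      rw [map_add, map_add, map_add, map_add, map_add, map_zero,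
        Stmt12.Ext_sh_eq n 2 (by omega), Stmt12.Ext_sh_ne n 2 0 (by omega) (by omega),
        Stmt12.Ext_sh_ne n 2 1 (by omega) (by omega),
        Stmt12.Ext_of_ne n 2 3 (by omega), Stmt12.Ext_of_ne n 2 4 (by omega),
        Stmt12.Ext_of_ne n 2 5 (by omega)] at h
      simpa using h
    have tu : Stmt12.tau n u.2 = 0 := by
      have h := congrArg (Stmt12.Slot n 3) h1
      rw [map_add, map_add, map_add, map_add, map_add, map_zero,
        Stmt12.Slot_sh n 3 0 (by omega) (by omega) (by omega),
        Stmt12.Slot_sh n 3 1 (by omega) (by omega) (by omega),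
        Stmt12.Slot_sh n 3 2 (by omega) (by omega) (by omega),
        Stmt12.Slot_of_eq n 3, Stmt12.Slot_of_ne n 3 4 (by omega),
        Stmt12.Slot_of_ne n 3 5 (by omega)] at h
      simpa using h
    have tv : Stmt12.tau n v.2 = 0 := by
      have h := congrArg (Stmt12.Slot n 4) h1
      rw [map_add, map_add, map_add, map_add, map_add, map_zero,
        Stmt12.Slot_sh n 4 0 (by omega) (by omega) (by omega),
        Stmt12.Slot_sh n 4 1 (by omega) (by omega) (by omega),
        Stmt12.Slot_sh n 4 2 (by omega) (by omega) (by omega),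
        Stmt12.Slot_of_eq n 4, Stmt12.Slot_of_ne n 4 3 (by omega),
        Stmt12.Slot_of_ne n 4 5 (by omega)] at h
      simpa using h
    have tw : Stmt12.tau n w.2 = 0 := by
      have h := congrArg (Stmt12.Slot n 5) h1
      rw [map_add, map_add, map_add, map_add, map_add, map_zero,
        Stmt12.Slot_sh n 5 0 (by omega) (by omega) (by omega),
        Stmt12.Slot_sh n 5 1 (by omega) (by omega) (by omega),
        Stmt12.Slot_sh n 5 2 (by omega) (by omega) (by omega),
        Stmt12.Slot_of_eq n 5, Stmt12.Slot_of_ne n 5 3 (by omega),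
        Stmt12.Slot_of_ne n 5 4 (by omega)] at h
      simpa using h
    have bu : u.2 ≠ 0 := by
      intro h0
      exact (sub_ne_zero.mpr (hpq 0)) (by rw [← hu]; exact Prod.ext eu h0)
    have bv : v.2 ≠ 0 := by
      intro h0
      exact (sub_ne_zero.mpr (hpq 3)) (by rw [← hv]; exact Prod.ext ev h0)
    have bw : w.2 ≠ 0 := by
      intro h0
      exact (sub_ne_zero.mpr (hpq 4)) (by rw [← hw]; exact Prod.ext ew h0)
    rw [Stmt12.tau_ker n hn u.2 bu tu, Stmt12.tau_ker n hn v.2 bv tv,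
      Stmt12.tau_ker n hn w.2 bw tw] at h2
    exact Stmt12.three_n n hn h2
  · intro x y z
    have hf : ∀ p : Fin 6 → Stmt12.G n,
        Stmt12.f n p = Stmt12.e1 n (p 0) + Stmt12.alpha n (Stmt12.e1 n (p 3))
          + Stmt12.alpha n (Stmt12.alpha n (Stmt12.e1 n (p 4))) := fun p => rfl
    rw [hf, hf]
    have v0 : (![x, y, x, z, y, z] : Fin 6 → Stmt12.G n) 0 = x := rfl
    have v3 : (![x, y, x, z, y, z] : Fin 6 → Stmt12.G n) 3 = z := rfl
    have v4 : (![x, y, x, z, y, z] : Fin 6 → Stmt12.G n) 4 = y := rfl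
    have w0 : (![y, x, z, x, z, y] : Fin 6 → Stmt12.G n) 0 = y := rfl
    have w3 : (![y, x, z, x, z, y] : Fin 6 → Stmt12.G n) 3 = x := rfl
    have w4 : (![y, x, z, x, z, y] : Fin 6 → Stmt12.G n) 4 = z := rfl
    rw [v0, v3, v4, w0, w3, w4, map_add, map_add, Stmt12.alpha_cube]
    abel
end

section
/- The class of finite semilattices has the amalgamation property: if A, B, C are finite semilattices (types with SemilatticeInf and Fintype instances), and f : A → B, g : A → C are injective maps satisfying f (a ⊓ a') = f a ⊓ f a' and g (a ⊓ a') = g a ⊓ g a' for all a, a' ∈ A, then there exist a finite semilattice D (a type with SemilatticeInf and Fintype instances) and injective maps h : B → D, k : C → D, each preserving ⊓, such that h (f a) = k (g a) for all a ∈ A. -/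
/-- The class of finite semilattices has the amalgamation property. -/
theorem stmt_15 (A B C : Type)
    [SemilatticeInf A] [Fintype A] [SemilatticeInf B] [Fintype B]
    [SemilatticeInf C] [Fintype C]
    (f : A → B) (g : A → C)
    (hf : Function.Injective f) (hg : Function.Injective g)
    (hf' : ∀ a a' : A, f (a ⊓ a') = f a ⊓ f a')
    (hg' : ∀ a a' : A, g (a ⊓ a') = g a ⊓ g a') :
    ∃ (D : Type) (instD : SemilatticeInf D) (_ : Fintype D),
      letI := instD
      ∃ (h : B → D) (k : C → D),
        Function.Injective h ∧ Function.Injective k ∧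
        (∀ b b' : B, h (b ⊓ b') = h b ⊓ h b') ∧
        (∀ c c' : C, k (c ⊓ c') = k c ⊓ k c') ∧
        (∀ a : A, h (f a) = k (g a)) := by
  classical
  -- f and g reflect the order
  have hfle : ∀ a a' : A, f a ≤ f a' ↔ a ≤ a' := by
    intro a a'
    constructor
    · intro hle
      have : f (a ⊓ a') = f a := by rw [hf']; exact inf_eq_left.mpr hle
      exact inf_eq_left.mp (hf this)
    · intro hle
      have : f (a ⊓ a') = f a := congrArg f (inf_eq_left.mpr hle)
      rw [hf'] at this
      exact inf_eq_left.mp this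
  have hgle : ∀ a a' : A, g a ≤ g a' ↔ a ≤ a' := by
    intro a a'
    constructor
    · intro hle
      have : g (a ⊓ a') = g a := by rw [hg']; exact inf_eq_left.mpr hle
      exact inf_eq_left.mp (hg this)
    · intro hle
      have : g (a ⊓ a') = g a := congrArg g (inf_eq_left.mpr hle)
      rw [hg'] at this
      exact inf_eq_left.mp this
  refine ⟨Set B × Set C, inferInstance, inferInstance,
    (fun b => ({x | x ≤ b}, {c | ∃ a, c ≤ g a ∧ f a ≤ b})),
    (fun c => ({x | ∃ a, x ≤ f a ∧ g a ≤ c}, {y | y ≤ c})), ?_, ?_, ?_, ?_, ?_⟩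
  · intro b b' hbb'
    have h1 : {x | x ≤ b} = {x | x ≤ b'} := congrArg Prod.fst hbb'
    have hb : b ∈ {x | x ≤ b'} := h1 ▸ (le_refl b)
    have hb' : b' ∈ {x | x ≤ b} := h1 ▸ (le_refl b')
    exact le_antisymm hb hb'
  · intro c c' hcc'
    have h1 : {y | y ≤ c} = {y | y ≤ c'} := congrArg Prod.snd hcc'
    have hb : c ∈ {y | y ≤ c'} := h1 ▸ (le_refl c)
    have hb' : c' ∈ {y | y ≤ c} := h1 ▸ (le_refl c')
    exact le_antisymm hb hb'
  · intro b b'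
    refine Prod.ext ?_ ?_
    · ext x; simp [le_inf_iff]
    · ext c
      simp only [Set.mem_setOf_eq, Prod.snd_inf, Set.mem_inter_iff]
      constructor
      · rintro ⟨a, hc, ha⟩
        exact ⟨⟨a, hc, ha.trans inf_le_left⟩, ⟨a, hc, ha.trans inf_le_right⟩⟩
      · rintro ⟨⟨a, hc, ha⟩, ⟨a', hc', ha'⟩⟩
        refine ⟨a ⊓ a', ?_, ?_⟩
        · rw [hg']; exact le_inf hc hc'
        · rw [hf']; exact le_inf (inf_le_left.trans ha) (inf_le_right.trans ha')
  · intro c c'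
    refine Prod.ext ?_ ?_
    · ext x
      simp only [Set.mem_setOf_eq, Prod.fst_inf, Set.mem_inter_iff]
      constructor
      · rintro ⟨a, hx, ha⟩
        exact ⟨⟨a, hx, ha.trans inf_le_left⟩, ⟨a, hx, ha.trans inf_le_right⟩⟩
      · rintro ⟨⟨a, hx, ha⟩, ⟨a', hx', ha'⟩⟩
        refine ⟨a ⊓ a', ?_, ?_⟩
        · rw [hf']; exact le_inf hx hx'
        · rw [hg']; exact le_inf (inf_le_left.trans ha) (inf_le_right.trans ha')
    · ext y; simp [le_inf_iff]
  · intro a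
    refine Prod.ext ?_ ?_
    · ext x
      simp only [Set.mem_setOf_eq]
      constructor
      · intro hx; exact ⟨a, hx, le_refl _⟩
      · rintro ⟨a', hx, ha'⟩
        exact hx.trans (((hfle a' a).mpr ((hgle a' a).mp ha')))
    · ext c
      simp only [Set.mem_setOf_eq]
      constructor
      · rintro ⟨a', hc, ha'⟩
        exact hc.trans (((hgle a' a).mpr ((hfle a' a).mp ha')))
      · intro hc; exact ⟨a, hc, le_refl _⟩
end

section
/- Let T be a semilattice (a type with a SemilatticeInf instance) and let f : (Fin 6 → T) → T be a map that preserves pointwise ⊓ (f (p ⊓ q) = f p ⊓ f q for all tuples p, q, where (p ⊓ q) i = p i ⊓ q i), preserves ≠, and satisfies condition (†). Suppose T contains elements x, y, z, w, u, v with x < y, x < z, y < w, z < w, y < u, y < v, u < w, v < w, y ⊓ z = x, and u ⊓ v = y. Then there exist a, b, c ∈ T with a < b and b < c such that f(b,a,b,a,a,a) ≠ f(c,a,c,a,a,a) or f(a,b,a,a,b,a) ≠ f(a,c,a,a,c,a). -/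
private theorem cons_val_five {α : Type*} {m : ℕ} (x : α) (u : Fin (m + 5) → α) :
    Matrix.vecCons x u 5 =
      Matrix.vecHead (Matrix.vecTail (Matrix.vecTail (Matrix.vecTail (Matrix.vecTail u)))) :=
  rfl

/-- Claim 2 in the proof of the semilattice dichotomy: if a semilattice
contains a copy of the two double-diamond configuration and `f` is a ≠-preserving,
⊓-preserving map satisfying condition (†), then there exist `a < b < c` with
`f(b,a,b,a,a,a) ≠ f(c,a,c,a,a,a)` or `f(a,b,a,a,b,a) ≠ f(a,c,a,a,c,a)`. -/
theorem stmt_18 (T : Type) [SemilatticeInf T]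
    (f : (Fin 6 → T) → T)
    (hinf : ∀ p q : Fin 6 → T, f (p ⊓ q) = f p ⊓ f q)
    (hne : ∀ p q : Fin 6 → T, (∀ i, p i ≠ q i) → f p ≠ f q)
    (hdagger : ∀ x y z u v w : T,
      (f ![x, y, x, z, y, z] = f ![u, v, u, w, v, w] ↔
        f ![y, x, z, x, z, y] = f ![v, u, w, u, w, v]))
    (x y z w u v : T)
    (hxy : x < y) (hxz : x < z) (hyw : y < w) (hzw : z < w)
    (hyu : y < u) (hyv : y < v) (huw : u < w) (hvw : v < w)
    (hyz : y ⊓ z = x) (huv : u ⊓ v = y) :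
    ∃ a b c : T, a < b ∧ b < c ∧
      (f ![b, a, b, a, a, a] ≠ f ![c, a, c, a, a, a] ∨
       f ![a, b, a, a, b, a] ≠ f ![a, c, a, a, c, a]) := by
  by_contra hcon
  push_neg at hcon
  -- basic order facts
  have hxu : x ≤ u := hxy.le.trans hyu.le
  have hxv : x ≤ v := hxy.le.trans hyv.le
  have hxw : x ≤ w := hxy.le.trans hyw.le
  have lux : u ⊓ x = x := inf_eq_right.mpr hxu
  have lvx : v ⊓ x = x := inf_eq_right.mpr hxv
  have lwx : w ⊓ x = x := inf_eq_right.mpr hxw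
  have lyx : y ⊓ x = x := inf_eq_right.mpr hxy.le
  have lzx : z ⊓ x = x := inf_eq_right.mpr hxz.le
  have lxw : x ⊓ w = x := inf_eq_left.mpr hxw
  have lyw : y ⊓ w = y := inf_eq_left.mpr hyw.le
  have lwz : w ⊓ z = z := inf_eq_right.mpr hzw.le
  have lmn : (u ⊓ z) ⊓ (v ⊓ z) = x := by
    rw [inf_inf_inf_comm, huv, inf_idem, hyz]
  -- instances of the negated conclusion
  have E1yuw : f ![u, y, u, y, y, y] = f ![w, y, w, y, y, y] := (hcon y u w hyu huw).1
  have E1yvw : f ![v, y, v, y, y, y] = f ![w, y, w, y, y, y] := (hcon y v w hyv hvw).1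
  have E1xyw : f ![y, x, y, x, x, x] = f ![w, x, w, x, x, x] := (hcon x y w hxy hyw).1
  have E1xzw : f ![z, x, z, x, x, x] = f ![w, x, w, x, x, x] := (hcon x z w hxz hzw).1
  have E2xyw : f ![x, y, x, x, y, x] = f ![x, w, x, x, w, x] := (hcon x y w hxy hyw).2
  have E2xzw : f ![x, z, x, x, z, x] = f ![x, w, x, x, w, x] := (hcon x z w hxz hzw).2
  have E2yuw : f ![y, u, y, y, u, y] = f ![y, w, y, y, w, y] := (hcon y u w hyu huw).2
  have E2yvw : f ![y, v, y, y, v, y] = f ![y, w, y, y, w, y] := (hcon y v w hyv hvw).2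
  -- Part A : f (x,x,x,y,x,x) = f (x,x,z,y,x,x)
  have m1 : (![u, y, u, y, y, y] ⊓ ![x, x, z, w, x, x] : Fin 6 → T)
      = ![x, x, u ⊓ z, y, x, x] := by
    funext i; fin_cases i <;> simp [Pi.inf_apply, cons_val_five, lux, lyx, lyw]
  have m2 : (![w, y, w, y, y, y] ⊓ ![x, x, z, w, x, x] : Fin 6 → T)
      = ![x, x, z, y, x, x] := by
    funext i; fin_cases i <;> simp [Pi.inf_apply, cons_val_five, lwx, lyx, lwz, lyw]
  have m1' : (![v, y, v, y, y, y] ⊓ ![x, x, z, w, x, x] : Fin 6 → T)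
      = ![x, x, v ⊓ z, y, x, x] := by
    funext i; fin_cases i <;> simp [Pi.inf_apply, cons_val_five, lvx, lyx, lyw]
  have hA1 : f ![x, x, u ⊓ z, y, x, x] = f ![x, x, z, y, x, x] := by
    rw [← m1, ← m2, hinf, hinf, E1yuw]
  have hA2 : f ![x, x, v ⊓ z, y, x, x] = f ![x, x, z, y, x, x] := by
    rw [← m1', ← m2, hinf, hinf, E1yvw]
  have hA3 : f ![x, x, u ⊓ z, y, x, x] = f ![x, x, v ⊓ z, y, x, x] := hA1.trans hA2.symm
  have m3 : (![x, x, u ⊓ z, y, x, x] ⊓ ![x, x, v ⊓ z, y, x, x] : Fin 6 → T)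
      = ![x, x, x, y, x, x] := by
    funext i; fin_cases i <;> simp [Pi.inf_apply, cons_val_five, lmn]
  have hA4 : f ![x, x, x, y, x, x] = f ![x, x, u ⊓ z, y, x, x] := by
    rw [← m3, hinf, hA3, inf_idem]
  have hA : f ![x, x, x, y, x, x] = f ![x, x, z, y, x, x] := hA4.trans hA1
  -- Part B : f (x,x,x,x,x,x) = f (y,x,y,x,x,x) and = f (x,y,x,x,y,x)
  have hB3 : f ![y, x, y, x, x, x] = f ![z, x, z, x, x, x] := E1xyw.trans E1xzw.symm
  have mB : (![y, x, y, x, x, x] ⊓ ![z, x, z, x, x, x] : Fin 6 → T)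
      = ![x, x, x, x, x, x] := by
    funext i; fin_cases i <;> simp [Pi.inf_apply, cons_val_five, hyz]
  have hB4 : f ![x, x, x, x, x, x] = f ![y, x, y, x, x, x] := by
    rw [← mB, hinf, hB3, inf_idem]
  have hB3' : f ![x, y, x, x, y, x] = f ![x, z, x, x, z, x] := E2xyw.trans E2xzw.symm
  have mB' : (![x, y, x, x, y, x] ⊓ ![x, z, x, x, z, x] : Fin 6 → T)
      = ![x, x, x, x, x, x] := by
    funext i; fin_cases i <;> simp [Pi.inf_apply, cons_val_five, hyz]
  have hB4' : f ![x, x, x, x, x, x] = f ![x, y, x, x, y, x] := by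
    rw [← mB', hinf, hB3', inf_idem]
  -- Part C : dagger consequences
  have hC1 : f ![x, x, x, x, x, x] = f ![x, y, x, y, x, x] := (hdagger x x x y x x).mp hB4
  have hC1' : f ![x, x, x, x, x, x] = f ![y, x, x, x, x, y] := (hdagger x x x x y x).mp hB4'
  have mC2a : (![x, x, x, x, x, x] ⊓ ![x, x, x, w, x, x] : Fin 6 → T)
      = ![x, x, x, x, x, x] := by
    funext i; fin_cases i <;> simp [Pi.inf_apply, cons_val_five, lxw]
  have mC2b : (![x, y, x, y, x, x] ⊓ ![x, x, x, w, x, x] : Fin 6 → T)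
      = ![x, x, x, y, x, x] := by
    funext i; fin_cases i <;> simp [Pi.inf_apply, cons_val_five, lyx, lyw]
  have hC2 : f ![x, x, x, x, x, x] = f ![x, x, x, y, x, x] := by
    rw [← mC2a, ← mC2b, hinf, hinf, hC1]
  -- Part D : f (y,x,x,x,x,y) = f (y,z,x,x,z,y)
  have mD1a : (![y, u, y, y, u, y] ⊓ ![w, z, x, x, z, w] : Fin 6 → T)
      = ![y, u ⊓ z, x, x, u ⊓ z, y] := by
    funext i; fin_cases i <;> simp [Pi.inf_apply, cons_val_five, lyw, lyx]
  have mD1b : (![y, w, y, y, w, y] ⊓ ![w, z, x, x, z, w] : Fin 6 → T)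
      = ![y, z, x, x, z, y] := by
    funext i; fin_cases i <;> simp [Pi.inf_apply, cons_val_five, lyw, lyx, lwz]
  have mD2a : (![y, v, y, y, v, y] ⊓ ![w, z, x, x, z, w] : Fin 6 → T)
      = ![y, v ⊓ z, x, x, v ⊓ z, y] := by
    funext i; fin_cases i <;> simp [Pi.inf_apply, cons_val_five, lyw, lyx]
  have hD1 : f ![y, u ⊓ z, x, x, u ⊓ z, y] = f ![y, z, x, x, z, y] := by
    rw [← mD1a, ← mD1b, hinf, hinf, E2yuw]
  have hD2 : f ![y, v ⊓ z, x, x, v ⊓ z, y] = f ![y, z, x, x, z, y] := by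
    rw [← mD2a, ← mD1b, hinf, hinf, E2yvw]
  have hD3' : f ![y, u ⊓ z, x, x, u ⊓ z, y] = f ![y, v ⊓ z, x, x, v ⊓ z, y] :=
    hD1.trans hD2.symm
  have mD3 : (![y, u ⊓ z, x, x, u ⊓ z, y] ⊓ ![y, v ⊓ z, x, x, v ⊓ z, y] : Fin 6 → T)
      = ![y, x, x, x, x, y] := by
    funext i; fin_cases i <;> simp [Pi.inf_apply, cons_val_five, lmn]
  have hD4 : f ![y, x, x, x, x, y] = f ![y, u ⊓ z, x, x, u ⊓ z, y] := by
    rw [← mD3, hinf, hD3', inf_idem]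
  have hD : f ![y, x, x, x, x, y] = f ![y, z, x, x, z, y] := hD4.trans hD1
  -- assemble the contradiction
  have hPQ : f ![x, x, z, y, x, x] = f ![y, z, x, x, z, y] :=
    hA.symm.trans (hC2.symm.trans (hC1'.trans hD))
  have hdist : ∀ i : Fin 6, (![x, x, z, y, x, x] : Fin 6 → T) i ≠ ![y, z, x, x, z, y] i := by
    intro i
    fin_cases i <;> simp [cons_val_five] <;>
      first | exact hxy.ne | exact hxy.ne' | exact hxz.ne | exact hxz.ne'
  exact hne _ _ hdist hPQ
end
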